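/- arXiv:2103.05492 — 3 statements merged into one kernel-verified Lean document; each statement's English description precedes it below -/
import Mathlib

section
/- Let k = (k_1,…,k_r) and l = (l_1,…,l_s) be indices, z = (z_1,…,z_r) ∈ 𝔻^r and w = (w_1,…,w_s) ∈ 𝔻^s. Assume that if both k and l are non-admissible (i.e., k_r = 1 and l_s = 1) then |z_r| < 1 or |w_s| < 1. Then the series defining Z_1(z/k | w/l) converges absolutely; moreover, in the case l = (1) and w = (1) one has Z_1(z/k) = Li^sh_k(z). -/
open scoped BigOperators

noncomputable section

namespace MCS

/-- An index is a tuple of positive integers. -/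
def IsIndex (k : List ℕ) : Prop := ∀ a ∈ k, 1 ≤ a

/-- An index is admissible if it is empty or its last entry is at least 2. -/
def Adm (k : List ℕ) : Prop := ∀ a, k.getLast? = some a → 2 ≤ a

/-- All entries of the tuple lie in the closed unit disk 𝔻. -/
def InDisk (z : List ℂ) : Prop := ∀ u ∈ z, ‖u‖ ≤ 1

/-- Partial sums of a tuple of gaps: `psum g i = g 0 + ⋯ + g i`. -/
def psum {r : ℕ} (g : Fin r → ℕ) (i : Fin r) : ℕ := ∑ j ∈ Finset.Iic i, g j

/-- The shuffle-type multiple polylogarithm `Li^sh_k(z)`, written as a sum over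
the gaps `g i = m_i - m_{i-1} ≥ 1`, so that `m_i = psum g i`. -/
def LiSh (k : List ℕ) (z : List ℂ) : ℂ :=
  ∑' g : Fin k.length → ℕ+,
    ∏ i : Fin k.length,
      (z.getD i.val 0) ^ ((g i : ℕ)) /
        ((psum (fun j => (g j : ℕ)) i : ℕ) : ℂ) ^ (k.get i)

/-- The term of the multivariable connected sum
`Z_n(z_1/k_1; … ; z_n/k_n | w/l)`, parametrized by the gaps
`g j i = m_i^{(j)} - m_{i-1}^{(j)} ≥ 1` and the gaps `c i = q_i - q_{i-1} ≥ 0`. -/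
def connTerm (n : ℕ) (k : Fin n → List ℕ) (z : Fin n → List ℂ)
    (l : List ℕ) (w : List ℂ)
    (g : (j : Fin n) → (Fin (k j).length → ℕ+)) (c : Fin l.length → ℕ) : ℂ :=
  -- the connector C(m_{r_1}^{(1)}, …, m_{r_n}^{(n)})
  (((∏ j, (∑ i, (g j i : ℕ)).factorial : ℕ) : ℂ) /
      (((∑ j, ∑ i, (g j i : ℕ)).factorial : ℕ) : ℂ))
  -- ∏_j ∏_i (z_i^{(j)})^{m_i^{(j)}-m_{i-1}^{(j)}} / (m_i^{(j)})^{k_i^{(j)}}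
  * (∏ j, ∏ i, ((z j).getD i.val 0) ^ ((g j i : ℕ)) /
      ((psum (fun i' => (g j i' : ℕ)) i : ℕ) : ℂ) ^ ((k j).get i))
  -- q_s ∏_i w_i^{q_i - q_{i-1}} / q_i^{l_i}
  * ((∑ i, c i : ℕ) : ℂ)
  * ∏ i, (w.getD i.val 0) ^ (c i) / ((psum c i : ℕ) : ℂ) ^ (l.get i)

/-- The domain of summation of the multivariable connected sum: for each `j`, the
positive gaps of `0 = m_0^{(j)} < m_1^{(j)} < ⋯`, and the gaps of
`q_0 = 0 < q_1 ≤ ⋯ ≤ q_s`, subject to `q_s = m_{r_1}^{(1)} + ⋯ + m_{r_n}^{(n)}`. -/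
def connDom (n : ℕ) (k : Fin n → List ℕ) (l : List ℕ) : Type :=
  { p : ((j : Fin n) → (Fin (k j).length → ℕ+)) × (Fin l.length → ℕ) //
    (∀ h : 0 < l.length, 1 ≤ p.2 ⟨0, h⟩) ∧
      (∑ i, p.2 i) = ∑ j, ∑ i, (p.1 j i : ℕ) }

/-- The multivariable connected sum `Z_n(z_1/k_1; … ; z_n/k_n | w/l)`. -/
def connZ (n : ℕ) (k : Fin n → List ℕ) (z : Fin n → List ℂ)
    (l : List ℕ) (w : List ℂ) : ℂ :=
  ∑' p : connDom n k l, connTerm n k z l w p.1.1 p.1.2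

/-- The arrow operation `k ↦ k_↑` on indices. -/
def upA : List ℕ → List ℕ
  | [] => []
  | [a] => [a + 1]
  | a :: b :: t => a :: upA (b :: t)

/-- The index part of the arrow operation `(z/k) ↦ (z/k)_{→v}` (for `v = 0` this is `↑`). -/
def arrK (k : List ℕ) (v : ℂ) : List ℕ := if v = 0 then upA k else k ++ [1]

/-- The variable part of the arrow operation `(z/k) ↦ (z/k)_{→v}`. -/
def arrZ (z : List ℂ) (v : ℂ) : List ℂ := if v = 0 then z else z ++ [v]

/-- The word (in `y = true`, `x = false`) associated with an index. -/
def toWord (k : List ℕ) : List Bool := k.flatMap (fun a => true :: List.replicate (a - 1) false)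

/-- Parsing a word back into an index. -/
def wparse : List Bool → List ℕ
  | [] => []
  | true :: rest => 1 :: wparse rest
  | false :: rest =>
    match wparse rest with
    | [] => []
    | a :: t => (a + 1) :: t

/-- The dual index `k†` of an admissible index `k`. -/
def dagger (k : List ℕ) : List ℕ := (wparse ((toWord k).map (fun b => !b))).reverse

end MCS


end

open MCS

noncomputable section
namespace MCSAux
open Finset MCS
open Finset MCS

lemma psum_le_sum {t : ℕ} (a : Fin t → ℕ) (i : Fin t) : psum a i ≤ ∑ j, a j :=
  Finset.sum_le_sum_of_subset (Finset.subset_univ _)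

lemma one_le_psum {t : ℕ} (ht : 0 < t) {a : Fin t → ℕ} {i : Fin t} (h : 1 ≤ a ⟨0, ht⟩) :
    1 ≤ psum a i :=
  le_trans h (Finset.single_le_sum (f := a) (fun _ _ => Nat.zero_le _)
    (Finset.mem_Iic.2 (by exact Fin.mk_le_of_le_val (Nat.zero_le _))))

lemma Iic_last {t : ℕ} (ht : 0 < t) : Finset.Iic (⟨t - 1, by omega⟩ : Fin t) = Finset.univ := by
  ext j
  simp only [Finset.mem_Iic, Finset.mem_univ, iff_true, Fin.le_def]
  exact Nat.le_pred_of_lt j.isLt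

lemma psum_last {t : ℕ} (ht : 0 < t) (a : Fin t → ℕ) :
    psum a ⟨t - 1, by omega⟩ = ∑ j, a j := by
  rw [psum, Iic_last ht]

lemma psum_split {t : ℕ} (a : Fin t → ℕ) {i j : Fin t} (hij : j.val + 1 = i.val) :
    psum a i = a i + psum a j := by
  rw [psum, psum, ← Finset.sum_insert (a := i) (s := Finset.Iic j)
    (by simp only [Finset.mem_Iic, Fin.le_def]; omega)]
  congr 1
  ext x
  simp only [Finset.mem_Iic, Finset.mem_insert, Fin.le_def, Fin.ext_iff]
  omega

lemma psum_inj {t : ℕ} {a b : Fin t → ℕ} (h : ∀ i, psum a i = psum b i) : a = b := by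
  have key : ∀ n, ∀ i : Fin t, i.val < n → a i = b i := by
    intro n
    induction n with
    | zero => intro i hi; omega
    | succ n ih =>
      intro i hi
      have hsplit : ∀ c : Fin t → ℕ, psum c i = c i + ∑ j ∈ Finset.Iio i, c j := by
        intro c
        rw [psum, ← Finset.Iio_insert i, Finset.sum_insert (by simp)]
      have hIo : ∑ j ∈ Finset.Iio i, a j = ∑ j ∈ Finset.Iio i, b j :=
        Finset.sum_congr rfl fun j hj => ih j (by
          have h2 := (Fin.lt_def).1 (Finset.mem_Iio.mp hj)
          omega)
      have hi' := h i
      rw [hsplit a, hsplit b, hIo] at hi'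
      omega
  funext i; exact key t i i.isLt

/-- harmonic-type sum -/
def Hm (m : ℕ) : ℝ := ∑ j ∈ Finset.Icc 1 m, ((j : ℝ))⁻¹

lemma Hm_nonneg (m : ℕ) : 0 ≤ Hm m :=
  Finset.sum_nonneg fun j _ => by positivity

lemma one_le_Hm {m : ℕ} (hm : 1 ≤ m) : 1 ≤ Hm m := by
  have h1 : ((1 : ℕ) : ℝ)⁻¹ ≤ Hm m :=
    Finset.single_le_sum (f := fun j : ℕ => ((j : ℝ))⁻¹) (fun j _ => by positivity)
      (Finset.mem_Icc.2 ⟨le_rfl, hm⟩)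
  simpa using h1

lemma Hm_le (m : ℕ) : Hm m ≤ 1 + Real.log m := by
  have : (harmonic m : ℝ) = Hm m := by
    rw [harmonic_eq_sum_Icc]
    push_cast
    rfl
  rw [← this]
  exact harmonic_le_one_add_log m

/-- geometric constant -/
def geoC (θ : ℝ) : ℝ := ∑' d : ℕ, ((d : ℝ) + 1) * θ ^ d

lemma geoC_summable {θ : ℝ} (h0 : 0 ≤ θ) (h1 : θ < 1) :
    Summable (fun d : ℕ => ((d : ℝ) + 1) * θ ^ d) := by
  have h2 : Summable (fun d : ℕ => ((d : ℝ)) ^ 1 * θ ^ d) :=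
    summable_pow_mul_geometric_of_norm_lt_one 1 (by rwa [Real.norm_eq_abs, abs_of_nonneg h0])
  have h3 : Summable (fun d : ℕ => θ ^ d) := summable_geometric_of_lt_one h0 h1
  have h4 := h2.add h3
  convert h4 using 2 with d
  ring

lemma term_le_geoC {θ : ℝ} (h0 : 0 ≤ θ) (h1 : θ < 1) (d : ℕ) :
    ((d : ℝ) + 1) * θ ^ d ≤ geoC θ :=
  (geoC_summable h0 h1).le_tsum d (fun j _ => by positivity)

lemma one_le_geoC {θ : ℝ} (h0 : 0 ≤ θ) (h1 : θ < 1) : 1 ≤ geoC θ := by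
  have := term_le_geoC h0 h1 0
  simpa using this

lemma pow_le_geoC_div {θ : ℝ} (h0 : 0 ≤ θ) (h1 : θ < 1) {m : ℕ} (hm : 1 ≤ m) :
    θ ^ m ≤ geoC θ / m := by
  rw [le_div_iff₀ (by exact_mod_cast hm : (0:ℝ) < m)]
  calc θ ^ m * m ≤ ((m : ℝ) + 1) * θ ^ m := by nlinarith [pow_nonneg h0 m]
    _ ≤ geoC θ := term_le_geoC h0 h1 m

lemma geo_icc_sum_le {θ : ℝ} (h0 : 0 ≤ θ) (h1 : θ < 1) {m : ℕ} (hm : 1 ≤ m) :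
    ∑ j ∈ Finset.Icc 1 m, θ ^ (m - j) * ((j : ℝ))⁻¹ ≤ geoC θ / m := by
  have hmR : (0:ℝ) < m := by exact_mod_cast hm
  have step : ∀ j ∈ Finset.Icc 1 m,
      θ ^ (m - j) * ((j : ℝ))⁻¹ ≤ (((m - j : ℕ) : ℝ) + 1) * θ ^ (m - j) / m := by
    intro j hj
    rw [Finset.mem_Icc] at hj
    obtain ⟨hj1, hjm⟩ := hj
    have hjR : (0:ℝ) < j := by exact_mod_cast hj1
    have hkeyN : m ≤ (m - j + 1) * j := by nlinarith [Nat.sub_add_cancel hjm]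
    have hkey : (m : ℝ) ≤ (((m - j : ℕ) : ℝ) + 1) * j := by exact_mod_cast hkeyN
    have hinv : ((j : ℝ))⁻¹ ≤ (((m - j : ℕ) : ℝ) + 1) / m := by
      rw [inv_eq_one_div, div_le_div_iff₀ hjR hmR]
      linarith
    calc θ ^ (m - j) * ((j : ℝ))⁻¹ ≤ θ ^ (m - j) * ((((m - j : ℕ) : ℝ) + 1) / m) := by
          gcongr
      _ = (((m - j : ℕ) : ℝ) + 1) * θ ^ (m - j) / m := by ring
  calc ∑ j ∈ Finset.Icc 1 m, θ ^ (m - j) * ((j : ℝ))⁻¹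
      ≤ ∑ j ∈ Finset.Icc 1 m, (((m - j : ℕ) : ℝ) + 1) * θ ^ (m - j) / m :=
        Finset.sum_le_sum step
    _ = (∑ j ∈ Finset.Icc 1 m, (((m - j : ℕ) : ℝ) + 1) * θ ^ (m - j)) / m :=
        (Finset.sum_div _ _ _).symm
    _ ≤ geoC θ / m := by
        gcongr
        have himg : ∑ j ∈ Finset.Icc 1 m, (((m - j : ℕ) : ℝ) + 1) * θ ^ (m - j)
            = ∑ d ∈ (Finset.Icc 1 m).image (fun j => m - j), ((d : ℝ) + 1) * θ ^ d := by
          rw [Finset.sum_image (by intro x hx y hy hxy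
                                   simp only [Finset.mem_coe, Finset.coe_Icc, Set.mem_Icc, Finset.mem_Icc] at hx hy hxy
                                   omega)]
        rw [himg]
        exact Summable.sum_le_tsum _ (fun d _ => by positivity) (geoC_summable h0 h1)

lemma term_nonneg {t : ℕ} (e : Fin t → ℕ) (ζ : Fin t → ℝ) (hζ0 : ∀ i, 0 ≤ ζ i)
    (a : Fin t → ℕ) : 0 ≤ ∏ i, ζ i ^ a i / ((psum a i : ℝ)) ^ e i :=
  Finset.prod_nonneg fun i _ => by
    have := hζ0 i
    positivity

set_option maxHeartbeats 2000000 in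
/-- Main side estimate, plain version. -/
lemma side_sum_one {t m : ℕ} (ht : 0 < t) (hm : 1 ≤ m)
    (e : Fin t → ℕ) (he : ∀ i, 1 ≤ e i)
    (ζ : Fin t → ℝ) (hζ0 : ∀ i, 0 ≤ ζ i) (hζ1 : ∀ i, ζ i ≤ 1)
    (A : Finset (Fin t → ℕ))
    (hA : ∀ a ∈ A, (∑ j, a j) = m ∧ 1 ≤ a ⟨0, ht⟩) :
    ∑ a ∈ A, ∏ i, ζ i ^ a i / ((psum a i : ℝ)) ^ e i
      ≤ Hm m ^ (t - 1) / (m : ℝ) ^ e ⟨t - 1, by omega⟩ := by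
  have hmR : (0:ℝ) < m := by exact_mod_cast hm
  set last : Fin t := ⟨t - 1, by omega⟩ with hlast
  classical
  set F : Fin t → ℕ → ℝ := fun i j =>
    if i = last then (if j = m then (((m:ℝ)) ^ e last)⁻¹ else 0) else ((j:ℝ))⁻¹ with hF
  have hF0 : ∀ i j, 0 ≤ F i j := by
    intro i j; simp only [hF]; split_ifs <;> positivity
  have hpsum1 : ∀ a ∈ A, ∀ i : Fin t, 1 ≤ psum a i := by
    intro a ha i
    exact one_le_psum ht (hA a ha).2
  have hpsumm : ∀ a ∈ A, ∀ i : Fin t, psum a i ≤ m := by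
    intro a ha i
    rw [← (hA a ha).1]
    exact psum_le_sum a i
  have hterm : ∀ a ∈ A,
      ∏ i, ζ i ^ a i / ((psum a i : ℝ)) ^ e i ≤ ∏ i, F i (psum a i) := by
    intro a ha
    apply Finset.prod_le_prod (fun i _ => by have := hζ0 i; positivity)
    intro i _
    have h1 : (1:ℝ) ≤ ((psum a i : ℕ) : ℝ) := by exact_mod_cast hpsum1 a ha i
    have hz1 : ζ i ^ a i ≤ 1 := pow_le_one₀ (hζ0 i) (hζ1 i)
    by_cases hi : i = last
    · subst hi
      have hpl : psum a last = m := by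
        rw [hlast, psum_last ht a]; exact (hA a ha).1
      rw [hpl]
      have : F last m = (((m:ℝ)) ^ e last)⁻¹ := by simp [hF]
      rw [this, div_eq_mul_inv]
      exact mul_le_of_le_one_left (by positivity) hz1
    · simp only [hF, if_neg hi]
      calc ζ i ^ a i / ((psum a i : ℕ) : ℝ) ^ e i
          ≤ 1 / ((psum a i : ℕ) : ℝ) ^ e i := by gcongr
        _ ≤ ((psum a i : ℕ) : ℝ)⁻¹ := by
            rw [one_div]
            apply inv_anti₀ (by linarith)
            exact le_self_pow₀ (by linarith) (by have := he i; omega)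
  have hinj : ∀ x ∈ A, ∀ y ∈ A, (fun i => psum x i) = (fun i => psum y i) → x = y := by
    intro x _ y _ hxy
    exact psum_inj (fun i => congrFun hxy i)
  have hsub : A.image (fun a => fun i => psum a i)
      ⊆ Fintype.piFinset (fun _ : Fin t => Finset.Icc 1 m) := by
    intro v hv
    rw [Finset.mem_image] at hv
    obtain ⟨a, ha, rfl⟩ := hv
    rw [Fintype.mem_piFinset]
    intro i
    exact Finset.mem_Icc.2 ⟨hpsum1 a ha i, hpsumm a ha i⟩
  have hlastsum : ∑ j ∈ Finset.Icc 1 m, F last j = (((m:ℝ)) ^ e last)⁻¹ := by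
    have hfe : ∀ j, F last j = if j = m then (((m:ℝ)) ^ e last)⁻¹ else 0 := by
      intro j; simp [hF]
    simp only [hfe]
    rw [Finset.sum_ite_eq' (Finset.Icc 1 m) m (fun _ => (((m:ℝ)) ^ e last)⁻¹)]
    simp [hm]
  calc ∑ a ∈ A, ∏ i, ζ i ^ a i / ((psum a i : ℝ)) ^ e i
      ≤ ∑ a ∈ A, ∏ i, F i (psum a i) := Finset.sum_le_sum hterm
    _ = ∑ v ∈ A.image (fun a => fun i => psum a i), ∏ i, F i (v i) :=
        (Finset.sum_image (f := fun v : Fin t → ℕ => ∏ i, F i (v i))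
          (g := fun a => fun i => psum a i) hinj).symm
    _ ≤ ∑ v ∈ Fintype.piFinset (fun _ : Fin t => Finset.Icc 1 m), ∏ i, F i (v i) :=
        Finset.sum_le_sum_of_subset_of_nonneg hsub
          (fun v _ _ => Finset.prod_nonneg fun i _ => hF0 _ _)
    _ = ∏ i, ∑ j ∈ Finset.Icc 1 m, F i j := (Finset.prod_univ_sum _ _).symm
    _ = (∑ j ∈ Finset.Icc 1 m, F last j) * ∏ i ∈ Finset.univ.erase last,
          ∑ j ∈ Finset.Icc 1 m, F i j :=
        (Finset.mul_prod_erase _ _ (Finset.mem_univ last)).symm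
    _ ≤ Hm m ^ (t - 1) / (m : ℝ) ^ e last := by
        rw [hlastsum]
        have hco : ∀ i ∈ Finset.univ.erase last,
            (∑ j ∈ Finset.Icc 1 m, F i j) = Hm m := by
          intro i hi
          have hine := (Finset.mem_erase.1 hi).1
          simp only [hF, if_neg hine]
          rfl
        have hrest : ∏ i ∈ Finset.univ.erase last, ∑ j ∈ Finset.Icc 1 m, F i j
            = Hm m ^ (t - 1) := by
          rw [Finset.prod_congr rfl hco, Finset.prod_const,
            Finset.card_erase_of_mem (Finset.mem_univ last), Finset.card_univ,
            Fintype.card_fin]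
        rw [hrest, div_eq_mul_inv, mul_comm]

set_option maxHeartbeats 2000000 in
/-- Main side estimate, geometric version. -/
lemma side_sum_geo {t m : ℕ} (ht : 0 < t) (hm : 1 ≤ m)
    (e : Fin t → ℕ) (he : ∀ i, 1 ≤ e i)
    (ζ : Fin t → ℝ) (hζ0 : ∀ i, 0 ≤ ζ i) (hζ1 : ∀ i, ζ i ≤ 1)
    {θ : ℝ} (hθ0 : 0 ≤ θ) (hθ1 : θ < 1) (hζl : ζ ⟨t - 1, by omega⟩ ≤ θ)
    (A : Finset (Fin t → ℕ))
    (hA : ∀ a ∈ A, (∑ j, a j) = m ∧ 1 ≤ a ⟨0, ht⟩) :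
    ∑ a ∈ A, ∏ i, ζ i ^ a i / ((psum a i : ℝ)) ^ e i
      ≤ geoC θ * Hm m ^ (t - 1) / (m : ℝ) ^ (e ⟨t - 1, by omega⟩ + 1) := by
  have hmR : (0:ℝ) < m := by exact_mod_cast hm
  set last : Fin t := ⟨t - 1, by omega⟩ with hlast
  classical
  have hgeo0 : (0:ℝ) ≤ geoC θ := le_trans zero_le_one (one_le_geoC hθ0 hθ1)
  rcases Nat.lt_or_ge t 2 with ht1 | ht2
  · -- t = 1
    have ht1' : t = 1 := by omega
    subst ht1'
    have hsub1 : A ⊆ {fun _ : Fin 1 => m} := by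
      intro a ha
      rw [Finset.mem_singleton]
      funext i
      have hi0 : i = 0 := Subsingleton.elim i 0
      subst hi0
      have := (hA a ha).1
      rwa [Fin.sum_univ_one] at this
    calc ∑ a ∈ A, ∏ i, ζ i ^ a i / ((psum a i : ℝ)) ^ e i
        ≤ ∑ a ∈ ({fun _ : Fin 1 => m} : Finset (Fin 1 → ℕ)),
            ∏ i, ζ i ^ a i / ((psum a i : ℝ)) ^ e i :=
          Finset.sum_le_sum_of_subset_of_nonneg hsub1
            (fun a _ _ => term_nonneg e ζ hζ0 a)
      _ = ∏ i : Fin 1, ζ i ^ (m : ℕ) / ((psum (fun _ => m) i : ℝ)) ^ e i :=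
          Finset.sum_singleton _ _
      _ = ζ 0 ^ m / ((psum (fun _ : Fin 1 => m) 0 : ℝ)) ^ e 0 := Fin.prod_univ_one _
      _ ≤ geoC θ * Hm m ^ (1 - 1) / (m : ℝ) ^ (e last + 1) := by
          have hps : psum (fun _ : Fin 1 => m) 0 = m := by
            have := psum_last (t := 1) one_pos (fun _ => m)
            simpa [Fin.sum_univ_one] using this
          rw [hps]
          have h0l : (0 : Fin 1) = last := Subsingleton.elim _ _
          have hθm : ζ 0 ^ m ≤ geoC θ / m := by
            calc ζ 0 ^ m ≤ θ ^ m := by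
                  apply pow_le_pow_left₀ (hζ0 0)
                  rw [h0l]; exact hζl
              _ ≤ geoC θ / m := pow_le_geoC_div hθ0 hθ1 hm
          rw [← h0l]
          calc ζ 0 ^ m / ((m:ℝ)) ^ e 0 ≤ (geoC θ / m) / ((m:ℝ)) ^ e 0 := by
                gcongr
            _ = geoC θ / ((m:ℝ)) ^ (e 0 + 1) := by
                rw [pow_succ, div_div]; ring_nf
            _ = geoC θ * Hm m ^ (1 - 1) / (m : ℝ) ^ (e 0 + 1) := by norm_num
  · -- t ≥ 2
    set prev : Fin t := ⟨t - 2, by omega⟩ with hprev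
    have hpl : prev ≠ last := by
      simp only [hprev, hlast, Ne, Fin.ext_iff]
      omega
    have hpl1 : prev.val + 1 = last.val := by
      simp only [hprev, hlast]; omega
    set F : Fin t → ℕ → ℝ := fun i j =>
      if i = last then (if j = m then (((m:ℝ)) ^ e last)⁻¹ else 0)
      else if i = prev then θ ^ (m - j) * ((j:ℝ))⁻¹ else ((j:ℝ))⁻¹ with hF
    have hF0 : ∀ i j, 0 ≤ F i j := by
      intro i j; simp only [hF]; split_ifs <;> positivity
    have hpsum1 : ∀ a ∈ A, ∀ i : Fin t, 1 ≤ psum a i := by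
      intro a ha i
      exact one_le_psum ht (hA a ha).2
    have hpsumm : ∀ a ∈ A, ∀ i : Fin t, psum a i ≤ m := by
      intro a ha i
      rw [← (hA a ha).1]
      exact psum_le_sum a i
    have hterm : ∀ a ∈ A,
        ∏ i, ζ i ^ a i / ((psum a i : ℝ)) ^ e i ≤ ∏ i, F i (psum a i) := by
      intro a ha
      have hplast : psum a last = m := by
        rw [hlast, psum_last ht a]; exact (hA a ha).1
      have hsplit : psum a last = a last + psum a prev := psum_split a hpl1
      have hgap : a last = m - psum a prev := by omega
      have hprevm : psum a prev ≤ m := by omega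
      -- peel off last and prev from both products
      have peel : ∀ (f : Fin t → ℝ), ∏ i, f i
          = f last * (f prev * ∏ i ∈ (Finset.univ.erase last).erase prev, f i) := by
        intro f
        rw [← Finset.mul_prod_erase _ f (Finset.mem_univ last),
          ← Finset.mul_prod_erase _ f (Finset.mem_erase.2 ⟨hpl, Finset.mem_univ prev⟩)]
      have hrest : ∀ i ∈ (Finset.univ.erase last).erase prev,
          ζ i ^ a i / ((psum a i : ℝ)) ^ e i ≤ F i (psum a i) := by
        intro i hi
        have hine : i ≠ prev := (Finset.mem_erase.1 hi).1
        have hine' : i ≠ last := (Finset.mem_erase.1 ((Finset.mem_erase.1 hi).2)).1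
        simp only [hF, if_neg hine', if_neg hine]
        have h1 : (1:ℝ) ≤ ((psum a i : ℕ) : ℝ) := by exact_mod_cast hpsum1 a ha i
        calc ζ i ^ a i / ((psum a i : ℕ) : ℝ) ^ e i
            ≤ 1 / ((psum a i : ℕ) : ℝ) ^ e i := by
              have hz1 : ζ i ^ a i ≤ 1 := pow_le_one₀ (hζ0 i) (hζ1 i)
              gcongr
          _ ≤ ((psum a i : ℕ) : ℝ)⁻¹ := by
              rw [one_div]
              apply inv_anti₀ (by linarith)
              exact le_self_pow₀ (by linarith) (by have := he i; omega)
      have hFlast : F last (psum a last) = (((m:ℝ)) ^ e last)⁻¹ := by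
        simp [hF, hplast]
      have hFprev : F prev (psum a prev)
          = θ ^ (m - psum a prev) * ((psum a prev : ℝ))⁻¹ := by
        simp [hF, hpl]
      have h1p : (1:ℝ) ≤ ((psum a prev : ℕ) : ℝ) := by exact_mod_cast hpsum1 a ha prev
      have hkey : (ζ last ^ a last / ((psum a last : ℝ)) ^ e last) *
          (ζ prev ^ a prev / ((psum a prev : ℝ)) ^ e prev)
          ≤ F last (psum a last) * F prev (psum a prev) := by
        rw [hFlast, hFprev, hplast]
        have hb1 : ζ last ^ a last / ((m:ℝ)) ^ e last
            ≤ θ ^ (m - psum a prev) * (((m:ℝ)) ^ e last)⁻¹ := by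
          rw [div_eq_mul_inv, ← hgap]
          exact mul_le_mul_of_nonneg_right (pow_le_pow_left₀ (hζ0 last) hζl _)
            (by positivity)
        have hb2 : ζ prev ^ a prev / ((psum a prev : ℝ)) ^ e prev
            ≤ ((psum a prev : ℝ))⁻¹ := by
          calc ζ prev ^ a prev / ((psum a prev : ℕ) : ℝ) ^ e prev
              ≤ 1 / ((psum a prev : ℕ) : ℝ) ^ e prev := by
                have hz1 : ζ prev ^ a prev ≤ 1 := pow_le_one₀ (hζ0 prev) (hζ1 prev)
                gcongr
            _ ≤ ((psum a prev : ℕ) : ℝ)⁻¹ := by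
                rw [one_div]
                apply inv_anti₀ (by linarith)
                exact le_self_pow₀ (by linarith) (by have := he prev; omega)
        calc (ζ last ^ a last / ((m:ℝ)) ^ e last) *
              (ζ prev ^ a prev / ((psum a prev : ℝ)) ^ e prev)
            ≤ (θ ^ (m - psum a prev) * (((m:ℝ)) ^ e last)⁻¹) * ((psum a prev : ℝ))⁻¹ := by
              exact mul_le_mul hb1 hb2
                (div_nonneg (pow_nonneg (hζ0 prev) _) (by positivity))
                (mul_nonneg (pow_nonneg hθ0 _) (by positivity))
          _ = (((m:ℝ)) ^ e last)⁻¹ * (θ ^ (m - psum a prev) * ((psum a prev : ℝ))⁻¹) := by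
              ring
      rw [peel (fun i => ζ i ^ a i / ((psum a i : ℝ)) ^ e i),
        peel (fun i => F i (psum a i)), ← mul_assoc, ← mul_assoc]
      exact mul_le_mul hkey
        (Finset.prod_le_prod (fun i _ => by have := hζ0 i; positivity) hrest)
        (Finset.prod_nonneg (fun i _ => by have := hζ0 i; positivity))
        (mul_nonneg (hF0 _ _) (hF0 _ _))
    have hinj : ∀ x ∈ A, ∀ y ∈ A, (fun i => psum x i) = (fun i => psum y i) → x = y := by
      intro x _ y _ hxy
      exact psum_inj (fun i => congrFun hxy i)
    have hsub : A.image (fun a => fun i => psum a i)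
        ⊆ Fintype.piFinset (fun _ : Fin t => Finset.Icc 1 m) := by
      intro v hv
      rw [Finset.mem_image] at hv
      obtain ⟨a, ha, rfl⟩ := hv
      rw [Fintype.mem_piFinset]
      intro i
      exact Finset.mem_Icc.2 ⟨hpsum1 a ha i, hpsumm a ha i⟩
    have hlastsum : ∑ j ∈ Finset.Icc 1 m, F last j = (((m:ℝ)) ^ e last)⁻¹ := by
      have hfe : ∀ j, F last j = if j = m then (((m:ℝ)) ^ e last)⁻¹ else 0 := by
        intro j; simp [hF]
      simp only [hfe]
      rw [Finset.sum_ite_eq' (Finset.Icc 1 m) m (fun _ => (((m:ℝ)) ^ e last)⁻¹)]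
      simp [hm]
    have hprevsum : ∑ j ∈ Finset.Icc 1 m, F prev j ≤ geoC θ / m := by
      have : ∀ j, F prev j = θ ^ (m - j) * ((j:ℝ))⁻¹ := by
        intro j; simp [hF, hpl]
      simp only [this]
      exact geo_icc_sum_le hθ0 hθ1 hm
    calc ∑ a ∈ A, ∏ i, ζ i ^ a i / ((psum a i : ℝ)) ^ e i
        ≤ ∑ a ∈ A, ∏ i, F i (psum a i) := Finset.sum_le_sum hterm
      _ = ∑ v ∈ A.image (fun a => fun i => psum a i), ∏ i, F i (v i) :=
          (Finset.sum_image (f := fun v : Fin t → ℕ => ∏ i, F i (v i))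
            (g := fun a => fun i => psum a i) hinj).symm
      _ ≤ ∑ v ∈ Fintype.piFinset (fun _ : Fin t => Finset.Icc 1 m), ∏ i, F i (v i) :=
          Finset.sum_le_sum_of_subset_of_nonneg hsub
            (fun v _ _ => Finset.prod_nonneg fun i _ => hF0 _ _)
      _ = ∏ i, ∑ j ∈ Finset.Icc 1 m, F i j := (Finset.prod_univ_sum _ _).symm
      _ = (∑ j ∈ Finset.Icc 1 m, F last j) * ((∑ j ∈ Finset.Icc 1 m, F prev j) *
            ∏ i ∈ (Finset.univ.erase last).erase prev, ∑ j ∈ Finset.Icc 1 m, F i j) := by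
          rw [← Finset.mul_prod_erase _ (fun i => ∑ j ∈ Finset.Icc 1 m, F i j)
              (Finset.mem_univ last),
            ← Finset.mul_prod_erase _ (fun i => ∑ j ∈ Finset.Icc 1 m, F i j)
              (Finset.mem_erase.2 ⟨hpl, Finset.mem_univ prev⟩)]
      _ ≤ (((m:ℝ)) ^ e last)⁻¹ * ((geoC θ / m) * Hm m ^ (t - 2)) := by
          rw [hlastsum]
          have hco : ∀ i ∈ (Finset.univ.erase last).erase prev,
              (∑ j ∈ Finset.Icc 1 m, F i j) = Hm m := by
            intro i hi
            have hine : i ≠ prev := (Finset.mem_erase.1 hi).1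
            have hine' : i ≠ last := (Finset.mem_erase.1 ((Finset.mem_erase.1 hi).2)).1
            simp only [hF, if_neg hine', if_neg hine]
            rfl
          have hrest : ∏ i ∈ (Finset.univ.erase last).erase prev,
              ∑ j ∈ Finset.Icc 1 m, F i j = Hm m ^ (t - 2) := by
            rw [Finset.prod_congr rfl hco, Finset.prod_const,
              Finset.card_erase_of_mem (Finset.mem_erase.2 ⟨hpl, Finset.mem_univ prev⟩),
              Finset.card_erase_of_mem (Finset.mem_univ last), Finset.card_univ,
              Fintype.card_fin]
            congr 1
          rw [hrest]
          refine mul_le_mul_of_nonneg_left ?_ (by positivity)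
          exact mul_le_mul_of_nonneg_right hprevsum (pow_nonneg (Hm_nonneg m) _)
      _ ≤ geoC θ * Hm m ^ (t - 1) / (m : ℝ) ^ (e last + 1) := by
          have hH1 : (1:ℝ) ≤ Hm m := one_le_Hm hm
          have hHp : Hm m ^ (t - 2) ≤ Hm m ^ (t - 1) :=
            pow_le_pow_right₀ hH1 (by omega)
          calc (((m:ℝ)) ^ e last)⁻¹ * ((geoC θ / m) * Hm m ^ (t - 2))
              ≤ (((m:ℝ)) ^ e last)⁻¹ * ((geoC θ / m) * Hm m ^ (t - 1)) := by
                refine mul_le_mul_of_nonneg_left ?_ (by positivity)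
                exact mul_le_mul_of_nonneg_left hHp (by positivity)
            _ = geoC θ * Hm m ^ (t - 1) / (m : ℝ) ^ (e last + 1) := by
                rw [pow_succ]
                field_simp


lemma sum_len_one {M : Type*} [AddCommMonoid M] {n : ℕ} (hn : n = 1) (c : Fin n → M) :
    ∑ i, c i = c ⟨0, by omega⟩ := by
  subst hn
  exact Fin.sum_univ_one c

lemma prod_len_one {M : Type*} [CommMonoid M] {n : ℕ} (hn : n = 1) (c : Fin n → M) :
    ∏ i, c i = c ⟨0, by omega⟩ := by
  subst hn
  exact Fin.prod_univ_one c

lemma eq_of_len_one {n : ℕ} (hn : n = 1) (i j : Fin n) : i = j := by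
  subst hn
  exact Subsingleton.elim i j

/-- one-sided factor of the connected-sum term -/
def sterm (k : List ℕ) (z : List ℂ) (a : Fin k.length → ℕ) : ℝ :=
  ∏ i, ‖z.getD i.val 0‖ ^ a i / ((psum a i : ℕ) : ℝ) ^ (k.get i)

lemma sterm_nonneg (k : List ℕ) (z : List ℂ) (a : Fin k.length → ℕ) : 0 ≤ sterm k z a :=
  Finset.prod_nonneg fun i _ => by positivity

lemma norm_connTerm (k : List ℕ) (z : List ℂ) (l : List ℕ) (w : List ℂ)
    (g : (j : Fin 1) → Fin ((fun _ : Fin 1 => k) j).length → ℕ+) (c : Fin l.length → ℕ) :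
    ‖connTerm 1 (fun _ => k) (fun _ => z) l w g c‖
      = sterm k z (fun i => (g 0 i : ℕ)) * ((∑ i, c i : ℕ) : ℝ) * sterm l w c := by
  unfold connTerm sterm
  simp only [Fin.prod_univ_one, Fin.sum_univ_one]
  rw [div_self (by exact_mod_cast Nat.factorial_ne_zero _ :
      ((Nat.factorial (∑ i, (g 0 i : ℕ)) : ℕ) : ℂ) ≠ 0), one_mul]
  rw [norm_mul, norm_mul, norm_prod, norm_prod, Complex.norm_natCast]
  congr 1
  congr 1
  · refine Finset.prod_congr rfl fun i _ => ?_
    rw [norm_div, norm_pow, norm_pow, Complex.norm_natCast]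
  · refine Finset.prod_congr rfl fun i _ => ?_
    rw [norm_div, norm_pow, norm_pow, Complex.norm_natCast]

lemma sterm_weak (k : List ℕ) (z : List ℂ) (ht : 0 < k.length)
    (he : ∀ i : Fin k.length, 1 ≤ k.get i)
    (hζ1 : ∀ i : Fin k.length, ‖z.getD i.val 0‖ ≤ 1)
    {m : ℕ} (hm : 1 ≤ m) (A : Finset (Fin k.length → ℕ))
    (hA : ∀ a ∈ A, (∑ j, a j) = m ∧ 1 ≤ a ⟨0, ht⟩) :
    ∑ a ∈ A, sterm k z a ≤ Hm m ^ (k.length - 1) * ((m:ℝ))⁻¹ := by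
  have hmR : (0:ℝ) < m := by exact_mod_cast hm
  have h := side_sum_one ht hm (fun i => k.get i) he
    (fun i => ‖z.getD i.val 0‖) (fun i => norm_nonneg _) hζ1 A hA
  simp only [sterm]
  refine le_trans h ?_
  rw [div_eq_mul_inv]
  refine mul_le_mul_of_nonneg_left ?_ (pow_nonneg (Hm_nonneg m) _)
  refine inv_anti₀ hmR ?_
  exact le_self_pow₀ (by exact_mod_cast hm) (Nat.one_le_iff_ne_zero.mp (he _))

lemma sterm_strong (k : List ℕ) (z : List ℂ) (ht : 0 < k.length)
    (he : ∀ i : Fin k.length, 1 ≤ k.get i)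
    (hζ1 : ∀ i : Fin k.length, ‖z.getD i.val 0‖ ≤ 1)
    (hstr : 2 ≤ k.get ⟨k.length - 1, by omega⟩ ∨ ‖z.getD (k.length - 1) 0‖ < 1) :
    ∃ C : ℝ, 0 ≤ C ∧ ∀ m : ℕ, 1 ≤ m → ∀ A : Finset (Fin k.length → ℕ),
      (∀ a ∈ A, (∑ j, a j) = m ∧ 1 ≤ a ⟨0, ht⟩) →
      ∑ a ∈ A, sterm k z a ≤ C * Hm m ^ (k.length - 1) * (((m:ℝ))^2)⁻¹ := by
  rcases hstr with hstr | hstr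
  · refine ⟨1, zero_le_one, fun m hm A hA => ?_⟩
    have hmR : (0:ℝ) < m := by exact_mod_cast hm
    have hm1 : (1:ℝ) ≤ m := by exact_mod_cast hm
    have h := side_sum_one ht hm (fun i => k.get i) he
      (fun i => ‖z.getD i.val 0‖) (fun i => norm_nonneg _) hζ1 A hA
    simp only [sterm]
    refine le_trans h ?_
    rw [one_mul, div_eq_mul_inv]
    refine mul_le_mul_of_nonneg_left ?_ (pow_nonneg (Hm_nonneg m) _)
    refine inv_anti₀ (by positivity) ?_
    exact pow_le_pow_right₀ hm1 hstr
  · refine ⟨geoC (‖z.getD (k.length - 1) 0‖),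
      le_trans zero_le_one (one_le_geoC (norm_nonneg _) hstr),
      fun m hm A hA => ?_⟩
    have hmR : (0:ℝ) < m := by exact_mod_cast hm
    have hm1 : (1:ℝ) ≤ m := by exact_mod_cast hm
    have hgeo0 : (0:ℝ) ≤ geoC (‖z.getD (k.length - 1) 0‖) :=
      le_trans zero_le_one (one_le_geoC (norm_nonneg _) hstr)
    have h := side_sum_geo ht hm (fun i => k.get i) he
      (fun i => ‖z.getD i.val 0‖) (fun i => norm_nonneg _) hζ1
      (norm_nonneg _) hstr le_rfl A hA
    simp only [sterm]
    refine le_trans h ?_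
    rw [div_eq_mul_inv, mul_assoc, mul_assoc]
    refine mul_le_mul_of_nonneg_left ?_ hgeo0
    refine mul_le_mul_of_nonneg_left ?_ (pow_nonneg (Hm_nonneg m) _)
    refine inv_anti₀ (by positivity) ?_
    refine pow_le_pow_right₀ hm1 ?_
    exact Nat.add_le_add_right (he _) 1

lemma combine (r s : ℕ) (hr : 0 < r) (hs : 0 < s) {m : ℕ} (hm : 1 ≤ m)
    (Z W C : ℝ) (hZ0 : 0 ≤ Z) (hW0 : 0 ≤ W) (hC : 0 ≤ C)
    (hZ : Z ≤ C * Hm m ^ (r - 1) * (((m:ℝ))^2)⁻¹)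
    (hW : W ≤ Hm m ^ (s - 1) * ((m:ℝ))⁻¹) :
    (m : ℝ) * (Z * W) ≤ C * Hm m ^ (r + s - 2) * (((m:ℝ))^2)⁻¹ := by
  have hmR : (0:ℝ) < m := by exact_mod_cast hm
  have h1 : Z * W ≤ (C * Hm m ^ (r-1) * (((m:ℝ))^2)⁻¹) * (Hm m ^ (s-1) * ((m:ℝ))⁻¹) :=
    mul_le_mul hZ hW hW0
      (mul_nonneg (mul_nonneg hC (pow_nonneg (Hm_nonneg m) _)) (by positivity))
  calc (m:ℝ) * (Z * W)
      ≤ (m:ℝ) * ((C * Hm m ^ (r-1) * (((m:ℝ))^2)⁻¹) * (Hm m ^ (s-1) * ((m:ℝ))⁻¹)) :=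
        mul_le_mul_of_nonneg_left h1 (le_of_lt hmR)
    _ = C * (Hm m ^ (r-1) * Hm m ^ (s-1)) * ((m:ℝ) * (((m:ℝ))^2)⁻¹ * ((m:ℝ))⁻¹) := by
        ring
    _ = C * Hm m ^ (r + s - 2) * (((m:ℝ))^2)⁻¹ := by
        rw [← pow_add]
        have he' : r - 1 + (s - 1) = r + s - 2 := by omega
        rw [he']
        have hmm : (m:ℝ) * (((m:ℝ))^2)⁻¹ * ((m:ℝ))⁻¹ = (((m:ℝ))^2)⁻¹ := by
          field_simp
        rw [hmm]

lemma Hm_pow_le (A : ℕ) : ∃ C : ℝ, 0 ≤ C ∧ ∀ m : ℕ, 1 ≤ m →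
    Hm m ^ A ≤ C * (m:ℝ) ^ ((1:ℝ)/2) := by
  rcases Nat.eq_zero_or_pos A with hA0 | hA1
  · refine ⟨1, zero_le_one, fun m hm => ?_⟩
    subst hA0
    rw [pow_zero, one_mul]
    have hm1 : (1:ℝ) ≤ (m:ℝ) := by exact_mod_cast hm
    calc (1:ℝ) = (m:ℝ) ^ (0:ℝ) := (Real.rpow_zero _).symm
      _ ≤ (m:ℝ) ^ ((1:ℝ)/2) := Real.rpow_le_rpow_of_exponent_le hm1 (by norm_num)
  · refine ⟨(1 + 2*(A:ℝ))^A, by positivity, fun m hm => ?_⟩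
    have hm1 : (1:ℝ) ≤ (m:ℝ) := by exact_mod_cast hm
    have hm0 : (0:ℝ) < m := by linarith
    have hA0R : (0:ℝ) < A := by exact_mod_cast hA1
    set δ : ℝ := 1/(2*(A:ℝ)) with hδdef
    have hδ0 : 0 < δ := by positivity
    have hrp0 : (0:ℝ) < (m:ℝ) ^ δ := Real.rpow_pos_of_pos hm0 δ
    have hlog : Real.log m ≤ 2*(A:ℝ) * (m:ℝ) ^ δ := by
      have h1 : Real.log ((m:ℝ) ^ δ) = δ * Real.log m := Real.log_rpow hm0 δ
      have h2 : Real.log ((m:ℝ) ^ δ) ≤ (m:ℝ) ^ δ :=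
        le_trans (Real.log_le_sub_one_of_pos hrp0) (by linarith)
      have h3 : δ * Real.log m ≤ (m:ℝ) ^ δ := h1 ▸ h2
      rw [hδdef] at h3
      have hAne : (A:ℝ) ≠ 0 := ne_of_gt hA0R
      calc Real.log m = (1/(2*(A:ℝ)) * Real.log m) * (2*(A:ℝ)) := by
            field_simp
        _ ≤ (m:ℝ) ^ δ * (2*(A:ℝ)) := by
            apply mul_le_mul_of_nonneg_right h3 (by positivity)
        _ = 2*(A:ℝ) * (m:ℝ) ^ δ := by ring
    have hone : (1:ℝ) ≤ (m:ℝ) ^ δ := by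
      calc (1:ℝ) = (m:ℝ) ^ (0:ℝ) := (Real.rpow_zero _).symm
        _ ≤ (m:ℝ) ^ δ := Real.rpow_le_rpow_of_exponent_le hm1 (le_of_lt hδ0)
    have hHm : Hm m ≤ (1 + 2*(A:ℝ)) * (m:ℝ) ^ δ := by
      calc Hm m ≤ 1 + Real.log m := Hm_le m
        _ ≤ (m:ℝ) ^ δ + 2*(A:ℝ)*(m:ℝ) ^ δ := add_le_add hone hlog
        _ = (1 + 2*(A:ℝ)) * (m:ℝ) ^ δ := by ring
    calc Hm m ^ A ≤ ((1 + 2*(A:ℝ)) * (m:ℝ) ^ δ) ^ A :=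
          pow_le_pow_left₀ (Hm_nonneg m) hHm A
      _ = (1 + 2*(A:ℝ))^A * ((m:ℝ) ^ δ)^A := mul_pow _ _ _
      _ = (1 + 2*(A:ℝ))^A * (m:ℝ) ^ ((1:ℝ)/2) := by
          congr 1
          rw [← Real.rpow_natCast ((m:ℝ) ^ δ) A, ← Real.rpow_mul (le_of_lt hm0)]
          congr 1
          rw [hδdef]
          field_simp

lemma summable_bound (K : ℝ) (hK : 0 ≤ K) (A : ℕ) :
    Summable (fun m : ℕ => K * Hm m ^ A * (((m:ℝ))^2)⁻¹) := by
  obtain ⟨C, hC0, hC⟩ := Hm_pow_le A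
  have hsum : Summable (fun m : ℕ => (K*C) * (m:ℝ) ^ (-(3/2) : ℝ)) :=
    (Real.summable_nat_rpow.mpr (by norm_num)).mul_left _
  refine Summable.of_nonneg_of_le
    (fun m => mul_nonneg (mul_nonneg hK (pow_nonneg (Hm_nonneg m) A)) (by positivity))
    ?_ hsum
  intro m
  rcases Nat.eq_zero_or_pos m with h0 | h1
  · subst h0
    simp only [Nat.cast_zero]
    rw [Real.zero_rpow (by norm_num)]
    norm_num
  · have hm0 : (0:ℝ) < m := by exact_mod_cast h1
    calc K * Hm m ^ A * (((m:ℝ))^2)⁻¹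
        ≤ K * (C * (m:ℝ) ^ ((1:ℝ)/2)) * (((m:ℝ))^2)⁻¹ := by
          refine mul_le_mul_of_nonneg_right
            (mul_le_mul_of_nonneg_left (hC m h1) hK) (by positivity)
      _ = (K*C) * ((m:ℝ) ^ ((1:ℝ)/2) * (((m:ℝ))^2)⁻¹) := by ring
      _ = (K*C) * (m:ℝ) ^ (-(3/2):ℝ) := by
          congr 1
          rw [← Real.rpow_natCast (m:ℝ) 2, ← Real.rpow_neg (le_of_lt hm0),
            ← Real.rpow_add hm0]
          norm_num

set_option maxHeartbeats 1000000 in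
lemma fiber_bound (k : List ℕ) (z : List ℂ) (l : List ℕ) (w : List ℂ)
    (hr : 0 < k.length) (hs : 0 < l.length) (K : ℝ)
    (hKbound : ∀ m : ℕ, 1 ≤ m →
      ∀ (Az : Finset (Fin k.length → ℕ)) (Aw : Finset (Fin l.length → ℕ)),
      (∀ a ∈ Az, (∑ j, a j) = m ∧ 1 ≤ a ⟨0, hr⟩) →
      (∀ b ∈ Aw, (∑ j, b j) = m ∧ 1 ≤ b ⟨0, hs⟩) →
      (m : ℝ) * ((∑ a ∈ Az, sterm k z a) * (∑ b ∈ Aw, sterm l w b))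
        ≤ K * Hm m ^ (k.length + l.length - 2) * (((m:ℝ))^2)⁻¹)
    (m : ℕ) (hm : 1 ≤ m) (u : Finset (connDom 1 (fun _ => k) l))
    (hu : ∀ p ∈ u, (∑ i, p.1.2 i) = m) :
    ∑ p ∈ u, ‖connTerm 1 (fun _ => k) (fun _ => z) l w p.1.1 p.1.2‖
      ≤ K * Hm m ^ (k.length + l.length - 2) * (((m:ℝ))^2)⁻¹ := by
  classical
  set Az := u.image (fun p : connDom 1 (fun _ => k) l => fun i => ((p.1.1 0 i : ℕ))) with hAz
  set Aw := u.image (fun p : connDom 1 (fun _ => k) l => p.1.2) with hAw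
  have hsumg : ∀ p : connDom 1 (fun _ => k) l,
      (∑ i, ((p.1.1 0 i : ℕ))) = ∑ i, p.1.2 i := by
    intro p
    have h2 := p.2.2
    rw [Fin.sum_univ_one] at h2
    exact h2.symm
  have hypz : ∀ a ∈ Az, (∑ j, a j) = m ∧ 1 ≤ a ⟨0, hr⟩ := by
    intro a ha
    rw [hAz, Finset.mem_image] at ha
    obtain ⟨p, hp, rfl⟩ := ha
    exact ⟨by rw [hsumg p]; exact hu p hp, (p.1.1 0 ⟨0, hr⟩).2⟩
  have hypw : ∀ b ∈ Aw, (∑ j, b j) = m ∧ 1 ≤ b ⟨0, hs⟩ := by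
    intro b hb
    rw [hAw, Finset.mem_image] at hb
    obtain ⟨p, hp, rfl⟩ := hb
    exact ⟨hu p hp, p.2.1 hs⟩
  have hπinj : ∀ p ∈ u, ∀ q ∈ u,
      ((fun i => ((p.1.1 0 i : ℕ))), p.1.2) = ((fun i => ((q.1.1 0 i : ℕ))), q.1.2)
        → p = q := by
    intro p _ q _ hpq
    rw [Prod.mk.injEq] at hpq
    obtain ⟨h1, h2⟩ := hpq
    apply Subtype.ext
    apply Prod.ext
    · funext j
      have hj : j = 0 := Subsingleton.elim j 0
      subst hj
      funext i
      exact PNat.coe_injective (congrFun h1 i)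
    · exact h2
  calc ∑ p ∈ u, ‖connTerm 1 (fun _ => k) (fun _ => z) l w p.1.1 p.1.2‖
      = ∑ p ∈ u, sterm k z (fun i => ((p.1.1 0 i : ℕ))) * ((m:ℕ):ℝ) * sterm l w p.1.2 := by
        refine Finset.sum_congr rfl fun p hp => ?_
        rw [norm_connTerm, hu p hp]
    _ = ∑ q ∈ u.image (fun p : connDom 1 (fun _ => k) l =>
          ((fun i => ((p.1.1 0 i : ℕ))), p.1.2)),
          sterm k z q.1 * ((m:ℕ):ℝ) * sterm l w q.2 :=
        (Finset.sum_image (f := fun q : (Fin k.length → ℕ) × (Fin l.length → ℕ) =>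
          sterm k z q.1 * ((m:ℕ):ℝ) * sterm l w q.2) hπinj).symm
    _ ≤ ∑ q ∈ Az ×ˢ Aw, sterm k z q.1 * ((m:ℕ):ℝ) * sterm l w q.2 := by
        apply Finset.sum_le_sum_of_subset_of_nonneg
        · intro q hq
          rw [Finset.mem_image] at hq
          obtain ⟨p, hp, rfl⟩ := hq
          rw [Finset.mem_product]
          exact ⟨Finset.mem_image_of_mem _ hp, Finset.mem_image_of_mem _ hp⟩
        · intro q _ _
          have h1 := sterm_nonneg k z q.1
          have h2 := sterm_nonneg l w q.2
          positivity
    _ = (m : ℝ) * ((∑ a ∈ Az, sterm k z a) * (∑ b ∈ Aw, sterm l w b)) := by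
        rw [Finset.sum_product]
        calc ∑ a ∈ Az, ∑ b ∈ Aw, sterm k z a * ((m:ℕ):ℝ) * sterm l w b
            = ∑ a ∈ Az, sterm k z a * ((m:ℕ):ℝ) * ∑ b ∈ Aw, sterm l w b := by
              refine Finset.sum_congr rfl fun a _ => ?_
              rw [Finset.mul_sum]
          _ = (m : ℝ) * ((∑ a ∈ Az, sterm k z a) * (∑ b ∈ Aw, sterm l w b)) := by
              simp_rw [mul_assoc]
              rw [← Finset.sum_mul]
              ring
    _ ≤ K * Hm m ^ (k.length + l.length - 2) * (((m:ℝ))^2)⁻¹ := hKbound m hm Az Aw hypz hypw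

end MCSAux
end

/-- For indices `k = (k_1,…,k_r)`, `l = (l_1,…,l_s)` and variables
`z ∈ 𝔻^r`, `w ∈ 𝔻^s`, if (`k` and `l` both non-admissible → `|z_r| < 1` or `|w_s| < 1`),
then the series defining `Z_1(z/k | w/l)` converges absolutely; moreover if `l = (1)`
and `w = (1)` then `Z_1(z/k) = Li^sh_k(z)`. -/
theorem stmt0 (k l : List ℕ) (z w : List ℂ)
    (hk : IsIndex k) (hl : IsIndex l)
    (hkne : k ≠ [])
    (hzlen : z.length = k.length) (hwlen : w.length = l.length)
    (hzD : InDisk z) (hwD : InDisk w)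
    (hconv : (¬ Adm k ∧ ¬ Adm l) →
      (∃ u, z.getLast? = some u ∧ ‖u‖ < 1) ∨
      (∃ u, w.getLast? = some u ∧ ‖u‖ < 1)) :
    Summable (fun p : connDom 1 (fun _ => k) l =>
      ‖connTerm 1 (fun _ => k) (fun _ => z) l w p.1.1 p.1.2‖) ∧
    (l = [1] → w = [1] →
      connZ 1 (fun _ => k) (fun _ => z) l w = LiSh k z) := by
  classical
  have hr : 0 < k.length := List.length_pos_iff.2 hkne
  constructor
  · -- summability
    rcases Nat.eq_zero_or_pos l.length with hs0 | hs
    · haveI hie : IsEmpty (connDom 1 (fun _ => k) l) := by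
        constructor
        rintro ⟨⟨g, c⟩, _, hc2⟩
        haveI : IsEmpty (Fin l.length) := by rw [hs0]; infer_instance
        have hcz : (∑ i, c i) = 0 := by simp
        have hg1 : 1 ≤ ∑ j : Fin 1, ∑ i, ((g j i : ℕ)) := by
          rw [Fin.sum_univ_one]
          exact le_trans (g 0 ⟨0, hr⟩).2
            (Finset.single_le_sum (f := fun i => ((g 0 i : ℕ)))
              (fun _ _ => Nat.zero_le _) (Finset.mem_univ (⟨0, hr⟩ : Fin k.length)))
        have hc2' : (∑ i, c i) = ∑ j, ∑ i, ((g j i : ℕ)) := hc2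
        omega
      exact hasSum_empty.summable
    · have hsne : l ≠ [] := by intro h; rw [h] at hs; simp at hs
      have hzne : z ≠ [] := by
        intro h
        rw [h] at hzlen
        simp at hzlen
        omega
      have hwne : w ≠ [] := by
        intro h
        rw [h] at hwlen
        simp at hwlen
        omega
      have hζz1 : ∀ i : Fin k.length, ‖z.getD i.val 0‖ ≤ 1 := by
        intro i
        have hilt : i.val < z.length := by rw [hzlen]; exact i.isLt
        rw [List.getD_eq_getElem z 0 hilt]
        exact hzD _ (List.getElem_mem hilt)
      have hζw1 : ∀ i : Fin l.length, ‖w.getD i.val 0‖ ≤ 1 := by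
        intro i
        have hilt : i.val < w.length := by rw [hwlen]; exact i.isLt
        rw [List.getD_eq_getElem w 0 hilt]
        exact hwD _ (List.getElem_mem hilt)
      have hek : ∀ i : Fin k.length, 1 ≤ k.get i := fun i =>
        hk _ (List.get_mem k i)
      have hel : ∀ i : Fin l.length, 1 ≤ l.get i := fun i =>
        hl _ (List.get_mem l i)
      have hkget : k.getLast? = some (k.get ⟨k.length - 1, by omega⟩) := by
        rw [List.getLast?_eq_getLast hkne, List.getLast_eq_getElem]
        rfl
      have hlget : l.getLast? = some (l.get ⟨l.length - 1, by omega⟩) := by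
        rw [List.getLast?_eq_getLast hsne, List.getLast_eq_getElem]
        rfl
      have hzget : z.getLast? = some (z.getD (k.length - 1) 0) := by
        rw [List.getLast?_eq_getLast hzne, List.getLast_eq_getElem]
        congr 1
        rw [List.getD_eq_getElem z 0 (by rw [hzlen]; omega)]
        congr 1
        omega
      have hwget : w.getLast? = some (w.getD (l.length - 1) 0) := by
        rw [List.getLast?_eq_getLast hwne, List.getLast_eq_getElem]
        congr 1
        rw [List.getD_eq_getElem w 0 (by rw [hwlen]; omega)]
        congr 1
        omega
      have hdisj : (2 ≤ k.get ⟨k.length - 1, by omega⟩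
            ∨ ‖z.getD (k.length - 1) 0‖ < 1)
          ∨ (2 ≤ l.get ⟨l.length - 1, by omega⟩
            ∨ ‖w.getD (l.length - 1) 0‖ < 1) := by
        by_cases hak : 2 ≤ k.get ⟨k.length - 1, by omega⟩
        · exact Or.inl (Or.inl hak)
        by_cases hal : 2 ≤ l.get ⟨l.length - 1, by omega⟩
        · exact Or.inr (Or.inl hal)
        · have hcc := hconv ⟨fun hA => hak (hA _ hkget), fun hA => hal (hA _ hlget)⟩
          rcases hcc with ⟨uz, huz, habs⟩ | ⟨uw, huw, habs⟩
          · refine Or.inl (Or.inr ?_)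
            rw [hzget] at huz
            rwa [Option.some.inj huz]
          · refine Or.inr (Or.inr ?_)
            rw [hwget] at huw
            rwa [Option.some.inj huw]
      obtain ⟨K, hK0, hKb⟩ : ∃ K : ℝ, 0 ≤ K ∧ ∀ m : ℕ, 1 ≤ m →
          ∀ (Az : Finset (Fin k.length → ℕ)) (Aw : Finset (Fin l.length → ℕ)),
          (∀ a ∈ Az, (∑ j, a j) = m ∧ 1 ≤ a ⟨0, hr⟩) →
          (∀ b ∈ Aw, (∑ j, b j) = m ∧ 1 ≤ b ⟨0, hs⟩) →
          (m : ℝ) * ((∑ a ∈ Az, MCSAux.sterm k z a) * (∑ b ∈ Aw, MCSAux.sterm l w b))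
            ≤ K * MCSAux.Hm m ^ (k.length + l.length - 2) * (((m:ℝ))^2)⁻¹ := by
        rcases hdisj with hstr | hstr
        · obtain ⟨C, hC0, hCb⟩ := MCSAux.sterm_strong k z hr hek hζz1 hstr
          refine ⟨C, hC0, fun m hm Az Aw hA hB => ?_⟩
          exact MCSAux.combine k.length l.length hr hs hm _ _ C
            (Finset.sum_nonneg fun a _ => MCSAux.sterm_nonneg k z a)
            (Finset.sum_nonneg fun b _ => MCSAux.sterm_nonneg l w b) hC0
            (hCb m hm Az hA) (MCSAux.sterm_weak l w hs hel hζw1 hm Aw hB)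
        · obtain ⟨C, hC0, hCb⟩ := MCSAux.sterm_strong l w hs hel hζw1 hstr
          refine ⟨C, hC0, fun m hm Az Aw hA hB => ?_⟩
          have hcomb := MCSAux.combine l.length k.length hs hr hm _ _ C
            (Finset.sum_nonneg fun b _ => MCSAux.sterm_nonneg l w b)
            (Finset.sum_nonneg fun a _ => MCSAux.sterm_nonneg k z a) hC0
            (hCb m hm Aw hB) (MCSAux.sterm_weak k z hr hek hζz1 hm Az hA)
          rw [mul_comm (∑ a ∈ Az, MCSAux.sterm k z a) (∑ b ∈ Aw, MCSAux.sterm l w b)]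
          rw [Nat.add_comm k.length l.length]
          exact hcomb
      apply summable_of_sum_le
        (c := ∑' m : ℕ, K * MCSAux.Hm m ^ (k.length + l.length - 2) * (((m:ℝ))^2)⁻¹)
        (fun p => norm_nonneg _)
      intro u
      have hN1 : ∀ p : connDom 1 (fun _ => k) l, 1 ≤ ∑ i, p.1.2 i := by
        intro p
        have h2 := p.2.2
        rw [Fin.sum_univ_one] at h2
        have hgg : 1 ≤ ∑ i, ((p.1.1 0 i : ℕ)) :=
          le_trans (p.1.1 0 ⟨0, hr⟩).2
            (Finset.single_le_sum (f := fun i => ((p.1.1 0 i : ℕ)))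
              (fun _ _ => Nat.zero_le _) (Finset.mem_univ (⟨0, hr⟩ : Fin k.length)))
        omega
      have hb0 : ∀ m : ℕ,
          0 ≤ K * MCSAux.Hm m ^ (k.length + l.length - 2) * (((m:ℝ))^2)⁻¹ := fun m =>
        mul_nonneg (mul_nonneg hK0 (pow_nonneg (MCSAux.Hm_nonneg m) _)) (by positivity)
      calc ∑ p ∈ u, ‖connTerm 1 (fun _ => k) (fun _ => z) l w p.1.1 p.1.2‖
          = ∑ m ∈ u.image (fun p => ∑ i, p.1.2 i),
              ∑ p ∈ u.filter (fun p => (∑ i, p.1.2 i) = m),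
                ‖connTerm 1 (fun _ => k) (fun _ => z) l w p.1.1 p.1.2‖ :=
            (Finset.sum_fiberwise_of_maps_to
              (fun p hp => Finset.mem_image_of_mem _ hp) _).symm
        _ ≤ ∑ m ∈ u.image (fun p => ∑ i, p.1.2 i),
              K * MCSAux.Hm m ^ (k.length + l.length - 2) * (((m:ℝ))^2)⁻¹ := by
            refine Finset.sum_le_sum fun m hmem => ?_
            rw [Finset.mem_image] at hmem
            obtain ⟨p, hp, hpm⟩ := hmem
            have hm1 : 1 ≤ m := hpm ▸ hN1 p
            exact MCSAux.fiber_bound k z l w hr hs K hKb m hm1 _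
              (fun q hq => (Finset.mem_filter.1 hq).2)
        _ ≤ ∑' m : ℕ, K * MCSAux.Hm m ^ (k.length + l.length - 2) * (((m:ℝ))^2)⁻¹ :=
            Summable.sum_le_tsum _ (fun m _ => hb0 m) (MCSAux.summable_bound K hK0 _)
  · -- the case l = [1], w = [1]
    intro hl1 hw1
    subst hl1
    subst hw1
    have hM1 : ∀ g : Fin k.length → ℕ+, 1 ≤ ∑ i, ((g i : ℕ)) := fun g =>
      le_trans (g ⟨0, hr⟩).2
        (Finset.single_le_sum (f := fun i => ((g i : ℕ)))
          (fun _ _ => Nat.zero_le _) (Finset.mem_univ (⟨0, hr⟩ : Fin k.length)))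
    let e : (Fin k.length → ℕ+) ≃ connDom 1 (fun _ => k) [1] :=
      { toFun := fun g => ⟨⟨fun _ => g, fun _ => ∑ i, ((g i : ℕ))⟩,
          fun _ => hM1 g, by
            rw [Fin.sum_univ_one, MCSAux.sum_len_one (n := ([1] : List ℕ).length) rfl]⟩
        invFun := fun p => p.1.1 0
        left_inv := fun g => rfl
        right_inv := fun p => by
          apply Subtype.ext
          apply Prod.ext
          · funext j
            have hj : j = 0 := Subsingleton.elim j 0
            rw [hj]
          · funext i
            have hi : i = ⟨0, by simp⟩ := MCSAux.eq_of_len_one rfl i _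
            rw [hi]
            have h2 := p.2.2
            rw [Fin.sum_univ_one, MCSAux.sum_len_one (n := ([1] : List ℕ).length) rfl] at h2
            exact h2.symm }
    unfold connZ LiSh
    rw [← Equiv.tsum_eq e (fun p : connDom 1 (fun _ => k) [1] =>
      connTerm 1 (fun _ => k) (fun _ => z) [1] [1] p.1.1 p.1.2)]
    refine tsum_congr fun g => ?_
    show connTerm 1 (fun _ => k) (fun _ => z) [1] [1]
        (fun _ => g) (fun _ => ∑ i, ((g i : ℕ))) = _
    unfold connTerm
    simp only [Fin.prod_univ_one, Fin.sum_univ_one]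
    rw [MCSAux.sum_len_one (n := ([1] : List ℕ).length) rfl,
      MCSAux.prod_len_one (n := ([1] : List ℕ).length) rfl]
    have hMne : ((∑ i, ((g i : ℕ)) : ℕ) : ℂ) ≠ 0 := by
      have := hM1 g
      exact_mod_cast by omega
    rw [div_self (by exact_mod_cast Nat.factorial_ne_zero _ :
        ((Nat.factorial (∑ i, ((g i : ℕ))) : ℕ) : ℂ) ≠ 0), one_mul]
    have hps : psum (fun _ : Fin (List.length ([1] : List ℕ)) => ∑ i, ((g i : ℕ)))
        ⟨0, by simp⟩ = ∑ i, ((g i : ℕ)) := by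
      have h := MCSAux.psum_last (t := (List.length ([1] : List ℕ))) (by simp)
        (fun _ => ∑ i, ((g i : ℕ)))
      rw [MCSAux.sum_len_one (n := ([1] : List ℕ).length) rfl] at h
      exact h
    rw [hps]
    simp only [List.getD, List.getElem?_cons_zero, Option.getD_some, List.get_eq_getElem,
      List.getElem_cons_zero, one_pow, pow_one, one_div]
    rw [mul_assoc, mul_inv_cancel₀ hMne, mul_one]
end

section
/- For every integer n ≥ 2 there exists a constant c > 0 such that for all integers N ≥ n, Σ_{(a_1,…,a_n) ∈ ℤ_{>0}^n, a_1+⋯+a_n = N} C(a_1,…,a_n)/(a_1⋯a_n) ≤ c/N². -/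
open scoped BigOperators
open Nat

-- lower bound on binomial coefficients
lemma my_le_choose : ∀ M k : ℕ, 1 ≤ k → k < M → M ≤ M.choose k := by
  intro M
  induction M with
  | zero => omega
  | succ M ih =>
    intro k hk1 hkM
    obtain ⟨j, rfl⟩ : ∃ j, k = j + 1 := ⟨k - 1, by omega⟩
    rcases Nat.eq_or_lt_of_le hk1 with h1 | h1
    · simp [← h1]
    rcases Nat.eq_or_lt_of_le (Nat.lt_succ_iff.mp hkM) with h2 | h2
    · rw [h2, Nat.choose_succ_self_right]
    · rw [Nat.choose_succ_succ, Nat.succ_eq_add_one]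
      have hj : M ≤ M.choose j := ih j (by omega) (by omega)
      have hp : 0 < M.choose (j+1) := Nat.choose_pos (by omega)
      omega

lemma my_middle {M k : ℕ} (hk1 : 1 ≤ k) (hkM : k < M) :
    k ! * (M - k)! ≤ (M - 1)! := by
  have hM : 0 < M := lt_of_le_of_lt (Nat.zero_le _) hkM
  have h1 : M.choose k * k ! * (M - k)! = M ! :=
    Nat.choose_mul_factorial_mul_factorial (le_of_lt hkM)
  have h2 : M * (M - 1)! = M ! := Nat.mul_factorial_pred hM.ne'
  have h3 : M * (k ! * (M - k)!) ≤ M.choose k * k ! * (M - k)! := by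
    rw [mul_assoc]
    exact Nat.mul_le_mul_right _ (my_le_choose M k hk1 hkM)
  rw [h1, ← h2] at h3
  exact Nat.le_of_mul_le_mul_left h3 hM

lemma my_sumfact (M : ℕ) : ∑ k ∈ Finset.range (M + 1), k ! * (M - k)! ≤ 3 * M ! := by
  rcases M with _ | m
  · simp
  rw [Finset.sum_range_succ' (fun k => k ! * (m + 1 - k)!) (m + 1),
    Finset.sum_range_succ]
  have hmid : ∑ i ∈ Finset.range m, (i + 1)! * (m + 1 - (i + 1))! ≤ m * m ! := by
    calc ∑ i ∈ Finset.range m, (i + 1)! * (m + 1 - (i + 1))!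
        ≤ ∑ _i ∈ Finset.range m, m ! := by
          refine Finset.sum_le_sum fun i hi => ?_
          have := my_middle (k := i + 1) (M := m + 1) (by omega)
            (by simp at hi; omega)
          simpa using this
      _ = m * m ! := by simp [mul_comm]
  have h0 : (0:ℕ)! * (m + 1 - 0)! = (m+1)! := by simp
  have hl : (m + 1)! * (m + 1 - (m + 1))! = (m+1)! := by simp
  rw [h0, hl]
  have : 3 * (m+1)! = (m+1)! + (m+1)! + (m+1) * m ! := by
    rw [Nat.factorial_succ]; ring
  have hmm : m * m ! ≤ (m + 1) * m ! := Nat.mul_le_mul_right _ (by omega)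
  omega

lemma my_tuple : ∀ n M : ℕ, ∑ b ∈ Finset.Nat.antidiagonalTuple n M, ∏ i, (b i)!
    ≤ 3 ^ n * M ! := by
  intro n
  induction n with
  | zero =>
    intro M
    rcases M with _ | m
    · simp
    · simp [Finset.Nat.antidiagonalTuple_zero_succ]
  | succ n ih =>
    intro M
    have key : ∑ b ∈ Finset.Nat.antidiagonalTuple (n+1) M, ∏ i, (b i)!
        = ∑ p ∈ (Finset.range (M+1)).sigma
            (fun k => Finset.Nat.antidiagonalTuple n (M - k)),
            p.1 ! * ∏ i, (p.2 i)! := by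
      refine Finset.sum_nbij' (fun b => ⟨b 0, Fin.tail b⟩)
        (fun p => Fin.cons p.1 p.2) ?_ ?_ ?_ ?_ ?_
      · intro b hb
        rw [Finset.Nat.mem_antidiagonalTuple] at hb
        rw [Fin.sum_univ_succ] at hb
        simp only [Finset.mem_sigma, Finset.mem_range,
          Finset.Nat.mem_antidiagonalTuple]
        constructor
        · omega
        · have : ∑ i : Fin n, Fin.tail b i = ∑ i : Fin n, b i.succ := rfl
          omega
      · intro p hp
        simp only [Finset.mem_sigma, Finset.mem_range,
          Finset.Nat.mem_antidiagonalTuple] at hp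
        rw [Finset.Nat.mem_antidiagonalTuple, Fin.sum_univ_succ]
        simp only [Fin.cons_zero, Fin.cons_succ]
        omega
      · intro b _; exact Fin.cons_self_tail b
      · intro p _
        simp [Fin.tail_cons]
      · intro b _
        rw [Fin.prod_univ_succ]
        rfl
    rw [key, Finset.sum_sigma]
    calc ∑ k ∈ Finset.range (M+1), ∑ t ∈ Finset.Nat.antidiagonalTuple n (M - k),
          k ! * ∏ i, (t i)!
        ≤ ∑ k ∈ Finset.range (M+1), k ! * (3 ^ n * (M - k)!) := by
          refine Finset.sum_le_sum fun k _ => ?_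
          rw [← Finset.mul_sum]
          exact Nat.mul_le_mul_left _ (ih (M - k))
      _ = 3 ^ n * ∑ k ∈ Finset.range (M+1), k ! * (M - k)! := by
          rw [Finset.mul_sum]; congr 1; ext k; ring
      _ ≤ 3 ^ n * (3 * M !) := Nat.mul_le_mul_left _ (my_sumfact M)
      _ = 3 ^ (n+1) * M ! := by ring

lemma my_shift (n N : ℕ) (hn : n ≤ N) :
    ∑ a ∈ (Finset.Nat.antidiagonalTuple n N).filter (fun a => ∀ i, 0 < a i),
      ∏ i, (a i - 1)!
    = ∑ b ∈ Finset.Nat.antidiagonalTuple n (N - n), ∏ i, (b i)! := by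
  refine Finset.sum_nbij' (fun a => fun i => a i - 1) (fun b => fun i => b i + 1)
    ?_ ?_ ?_ ?_ ?_
  · intro a ha
    rw [Finset.mem_filter, Finset.Nat.mem_antidiagonalTuple] at ha
    obtain ⟨hsum, hpos⟩ := ha
    rw [Finset.Nat.mem_antidiagonalTuple]
    beta_reduce
    have h1 : ∑ i, ((a i - 1) + 1) = ∑ i, a i :=
      Finset.sum_congr rfl (fun i _ => by have := hpos i; omega)
    have h2 : ∑ i, ((a i - 1) + 1) = (∑ i, (a i - 1)) + n := by
      rw [Finset.sum_add_distrib]; simp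
    omega
  · intro b hb
    rw [Finset.Nat.mem_antidiagonalTuple] at hb
    rw [Finset.mem_filter, Finset.Nat.mem_antidiagonalTuple]
    beta_reduce
    constructor
    · have : ∑ i, (b i + 1) = (∑ i, b i) + n := by
        rw [Finset.sum_add_distrib]; simp
      omega
    · intro i; beta_reduce; omega
  · intro a ha
    rw [Finset.mem_filter] at ha
    funext i
    have := ha.2 i
    beta_reduce
    omega
  · intro b _
    funext i
    beta_reduce
    omega
  · intro a _; rfl


/-- For every integer `n ≥ 2` there is a constant `c > 0` such that
for all `N ≥ n`,
`Σ_{a_1+⋯+a_n = N, a_i ≥ 1} C(a_1,…,a_n)/(a_1⋯a_n) ≤ c/N²`,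
where `C(a_1,…,a_n) = a_1!⋯a_n!/(a_1+⋯+a_n)!`. -/
theorem stmt4 (n : ℕ) (hn : 2 ≤ n) :
    ∃ c : ℝ, 0 < c ∧ ∀ N : ℕ, n ≤ N →
      ∑ a ∈ (Finset.Nat.antidiagonalTuple n N).filter (fun a => ∀ i, 0 < a i),
        (((∏ i, (a i).factorial : ℕ) : ℝ) / (((∑ i, a i).factorial : ℕ) : ℝ)) /
          (∏ i, (a i : ℝ))
        ≤ c / (N : ℝ) ^ 2 := by
  refine ⟨2 * 3 ^ n, by positivity, ?_⟩
  intro N hN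
  have hN2 : 2 ≤ N := le_trans hn hN
  have hfp : (0:ℝ) < (N ! : ℝ) := by exact_mod_cast Nat.factorial_pos N
  have hfac : (N - n)! * N ^ 2 ≤ 2 * N ! := by
    have e1 : (N - n)! ≤ (N - 2)! := Nat.factorial_le (by omega)
    have e2 : N ! = N * ((N - 1) * (N - 2)!) := by
      have h1 : N * (N - 1)! = N ! := Nat.mul_factorial_pred (by omega)
      have h2 : (N - 1) * (N - 2)! = (N - 1)! := by
        have := Nat.mul_factorial_pred (n := N - 1) (by omega)
        simpa [show N - 1 - 1 = N - 2 by omega] using this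
      rw [← h1, ← h2]
    have e3 : N ^ 2 ≤ 2 * (N * (N - 1)) := by
      obtain ⟨m, rfl⟩ : ∃ m, N = m + 2 := ⟨N - 2, by omega⟩
      have hm : m + 2 - 1 = m + 1 := rfl
      rw [hm]
      nlinarith
    calc (N - n)! * N ^ 2 ≤ (N - 2)! * (2 * (N * (N - 1))) :=
          Nat.mul_le_mul e1 e3
      _ = 2 * (N * ((N - 1) * (N - 2)!)) := by ring
      _ = 2 * N ! := by rw [e2]
  have hrw : ∑ a ∈ (Finset.Nat.antidiagonalTuple n N).filter (fun a => ∀ i, 0 < a i),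
        (((∏ i, (a i).factorial : ℕ) : ℝ) / (((∑ i, a i).factorial : ℕ) : ℝ)) /
          (∏ i, (a i : ℝ))
      = ((∑ a ∈ (Finset.Nat.antidiagonalTuple n N).filter (fun a => ∀ i, 0 < a i),
          ∏ i, (a i - 1)! : ℕ) : ℝ) / (N ! : ℝ) := by
    rw [Nat.cast_sum, Finset.sum_div]
    refine Finset.sum_congr rfl fun a ha => ?_
    rw [Finset.mem_filter, Finset.Nat.mem_antidiagonalTuple] at ha
    obtain ⟨hsum, hpos⟩ := ha
    rw [hsum]
    have hprod : ∏ i, (a i)! = (∏ i, a i) * ∏ i, (a i - 1)! := by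
      rw [← Finset.prod_mul_distrib]
      exact Finset.prod_congr rfl fun i _ => (Nat.mul_factorial_pred (hpos i).ne').symm
    rw [hprod]
    have hpp : (0:ℝ) < ∏ i, (a i : ℝ) :=
      Finset.prod_pos fun i _ => by exact_mod_cast hpos i
    push_cast
    field_simp
  rw [hrw]
  rw [div_le_div_iff₀ hfp (by positivity)]
  have hS : (∑ a ∈ (Finset.Nat.antidiagonalTuple n N).filter (fun a => ∀ i, 0 < a i),
      ∏ i, (a i - 1)!) ≤ 3 ^ n * (N - n)! := by
    rw [my_shift n N hN]
    exact my_tuple n (N - n)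
  have key : (∑ a ∈ (Finset.Nat.antidiagonalTuple n N).filter (fun a => ∀ i, 0 < a i),
      ∏ i, (a i - 1)!) * N ^ 2 ≤ 2 * 3 ^ n * N ! := by
    calc (∑ a ∈ (Finset.Nat.antidiagonalTuple n N).filter (fun a => ∀ i, 0 < a i),
        ∏ i, (a i - 1)!) * N ^ 2
        ≤ 3 ^ n * (N - n)! * N ^ 2 := Nat.mul_le_mul_right _ hS
      _ = 3 ^ n * ((N - n)! * N ^ 2) := by ring
      _ ≤ 3 ^ n * (2 * N !) := Nat.mul_le_mul_left _ hfac
      _ = 2 * 3 ^ n * N ! := by ring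
  exact_mod_cast key
end

section
/- ζ(4) = (8/17) · Σ_{m=1}^{∞} Σ_{n=1}^{∞} ((m−1)!·(n−1)!/(m+n)!) · Σ_{j=1}^{m+n} 1/j². Equivalently, Z_2(1;1 | 2,1) = (17/8)·ζ(4). -/
open scoped BigOperators
open Real Filter

namespace Stmt12

noncomputable def H2 (N : ℕ) : ℝ := ∑ j ∈ Finset.range N, (1:ℝ)/((j:ℝ)+1)^2
noncomputable def P (a b : ℕ) : ℝ := ((Nat.factorial a * Nat.factorial b : ℕ) : ℝ) / ((Nat.factorial (a+b+2) : ℕ) : ℝ)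
noncomputable def Q (a b : ℕ) : ℝ := ((Nat.factorial a * Nat.factorial b : ℕ) : ℝ) / ((Nat.factorial (a+b+1) : ℕ) : ℝ)

lemma fac_pos (k : ℕ) : (0:ℝ) < (Nat.factorial k : ℝ) := by exact_mod_cast Nat.factorial_pos k

lemma P_nonneg (a b : ℕ) : 0 ≤ P a b := by
  unfold P; positivity

lemma P_symm (a b : ℕ) : P a b = P b a := by
  unfold P; rw [mul_comm, add_comm a b]

lemma Q_eq (a b : ℕ) : Q a b = ((a:ℝ)+(b:ℝ)+2) * P a b := by
  unfold P Q
  have h : (Nat.factorial (a+b+2) : ℝ) = ((a:ℝ)+(b:ℝ)+2) * (Nat.factorial (a+b+1) : ℝ) := by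
    have : a+b+2 = (a+b+1)+1 := rfl
    rw [this, Nat.factorial_succ]; push_cast; ring
  rw [h]
  field_simp

lemma id1 (a b : ℕ) : Q a b - Q a (b+1) = ((a:ℝ)+1) * P a b := by
  unfold P Q
  have hb : (Nat.factorial (b+1) : ℝ) = ((b:ℝ)+1) * (Nat.factorial b : ℝ) := by
    rw [Nat.factorial_succ]; push_cast; ring
  have h2 : (Nat.factorial (a+(b+1)+1) : ℝ) = ((a:ℝ)+(b:ℝ)+2) * (Nat.factorial (a+b+1) : ℝ) := by
    have : a+(b+1)+1 = (a+b+1)+1 := by ring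
    rw [this, Nat.factorial_succ]; push_cast; ring
  have h3 : (Nat.factorial (a+b+2) : ℝ) = ((a:ℝ)+(b:ℝ)+2) * (Nat.factorial (a+b+1) : ℝ) := by
    have : a+b+2 = (a+b+1)+1 := rfl
    rw [this, Nat.factorial_succ]; push_cast; ring
  push_cast [h2, h3, hb]
  have hab : (0:ℝ) < (a:ℝ)+(b:ℝ)+2 := by positivity
  field_simp
  ring


lemma hasSum_telescope {v : ℕ → ℝ} (hd : ∀ n, v (n+1) ≤ v n) (hlim : Tendsto v atTop (nhds 0)) :
    HasSum (fun n => v n - v (n+1)) (v 0) := by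
  have hnn : ∀ n, 0 ≤ v n - v (n+1) := fun n => sub_nonneg.2 (hd n)
  rw [hasSum_iff_tendsto_nat_of_nonneg hnn]
  have hps : (fun N => ∑ i ∈ Finset.range N, (v i - v (i+1))) = fun N => v 0 - v N := by
    funext N; exact Finset.sum_range_sub' v N
  rw [hps]
  simpa using tendsto_const_nhds.sub hlim

lemma Q_antitone (a b : ℕ) : Q a (b+1) ≤ Q a b := by
  have := id1 a b
  nlinarith [P_nonneg a b, Nat.cast_nonneg (α := ℝ) a]

lemma Q_le (a b : ℕ) : Q a b ≤ (Nat.factorial a : ℝ) / ((b:ℝ)+1) := by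
  unfold Q
  rw [div_le_div_iff₀ (fac_pos _) (by positivity)]
  have hdvd : Nat.factorial (b+1) * Nat.factorial a ≤ Nat.factorial (a+b+1) := by
    have h := Nat.factorial_mul_factorial_dvd_factorial_add (b+1) a
    have : (b+1) + a = a+b+1 := by ring
    rw [this] at h
    exact Nat.le_of_dvd (Nat.factorial_pos _) h
  have : ((Nat.factorial (b+1) * Nat.factorial a : ℕ) : ℝ) ≤ ((Nat.factorial (a+b+1) : ℕ) : ℝ) := by
    exact_mod_cast hdvd
  calc ((Nat.factorial a * Nat.factorial b : ℕ):ℝ) * ((b:ℝ)+1)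
      = ((Nat.factorial (b+1) * Nat.factorial a : ℕ) : ℝ) := by
        push_cast [Nat.factorial_succ]; ring
    _ ≤ ((Nat.factorial (a+b+1) : ℕ):ℝ) := this
    _ ≤ ((Nat.factorial a : ℕ):ℝ) * ((Nat.factorial (a+b+1) : ℕ):ℝ) := by
        have h1 : (1:ℝ) ≤ (Nat.factorial a : ℝ) := by
          exact_mod_cast Nat.one_le_iff_ne_zero.mpr (Nat.factorial_ne_zero a)
        nlinarith [fac_pos (a+b+1)]
  
lemma Q_nonneg (a b : ℕ) : 0 ≤ Q a b := by unfold Q; positivity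

lemma Q_tendsto (a : ℕ) : Tendsto (fun b => Q a b) atTop (nhds 0) := by
  apply squeeze_zero (fun b => Q_nonneg a b) (fun b => Q_le a b)
  have h1 : Tendsto (fun b : ℕ => ((b:ℝ)+1)) atTop atTop := by
    exact tendsto_natCast_atTop_atTop.atTop_add tendsto_const_nhds
  exact Tendsto.div_atTop tendsto_const_nhds h1

lemma Q_zero (a : ℕ) : Q a 0 = 1/((a:ℝ)+1) := by
  unfold Q
  have : a + 0 + 1 = a + 1 := by ring
  rw [this, Nat.factorial_succ]
  push_cast
  rw [Nat.factorial_zero]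
  have := fac_pos a
  field_simp
  ring

lemma S1 (a : ℕ) : HasSum (fun b => P a b) (1/((a:ℝ)+1)^2) := by
  have ht := hasSum_telescope (v := Q a) (Q_antitone a) (Q_tendsto a)
  have ht2 : HasSum (fun b => ((a:ℝ)+1) * P a b) (1/((a:ℝ)+1)) := by
    have : (fun b => Q a b - Q a (b+1)) = fun b => ((a:ℝ)+1) * P a b := by
      funext b; exact id1 a b
    rwa [this, Q_zero] at ht
  have := ht2.mul_left (((a:ℝ)+1)⁻¹)
  have ha : ((a:ℝ)+1) ≠ 0 := by positivity
  convert this using 1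
  · rfl
  · funext b; field_simp
  · field_simp


lemma hz2' : HasSum (fun b : ℕ => (1:ℝ)/((b:ℝ)+1)^2) (π^2/6) := by
  have h0 : HasSum (fun n : ℕ => (1:ℝ)/(n:ℝ)^2) (π^2/6 + ∑ i ∈ Finset.range 1, (1:ℝ)/(i:ℝ)^2) := by
    simpa using hasSum_zeta_two
  have h := (hasSum_nat_add_iff (f := fun n : ℕ => (1:ℝ)/(n:ℝ)^2) 1).mpr h0
  have hfun : (fun n : ℕ => (1:ℝ)/((n+1:ℕ):ℝ)^2) = fun b : ℕ => (1:ℝ)/((b:ℝ)+1)^2 := by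
    funext b; push_cast; ring
  rwa [hfun] at h

lemma hz4' : HasSum (fun b : ℕ => (1:ℝ)/((b:ℝ)+1)^4) (π^4/90) := by
  have h0 : HasSum (fun n : ℕ => (1:ℝ)/(n:ℝ)^4) (π^4/90 + ∑ i ∈ Finset.range 1, (1:ℝ)/(i:ℝ)^4) := by
    simpa using hasSum_zeta_four
  have h := (hasSum_nat_add_iff (f := fun n : ℕ => (1:ℝ)/(n:ℝ)^4) 1).mpr h0
  have hfun : (fun n : ℕ => (1:ℝ)/((n+1:ℕ):ℝ)^4) = fun b : ℕ => (1:ℝ)/((b:ℝ)+1)^4 := by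
    funext b; push_cast; ring
  rwa [hfun] at h

lemma htel1 : HasSum (fun b : ℕ => (1:ℝ)/(((b:ℝ)+1)*((b:ℝ)+2))) 1 := by
  have hlim : Tendsto (fun b : ℕ => (1:ℝ)/((b:ℝ)+1)) atTop (nhds 0) := by
    apply Tendsto.div_atTop tendsto_const_nhds
    exact tendsto_natCast_atTop_atTop.atTop_add tendsto_const_nhds
  have hd : ∀ b : ℕ, (1:ℝ)/((↑(b+1):ℝ)+1) ≤ 1/((b:ℝ)+1) := by
    intro b
    apply div_le_div_of_nonneg_left one_pos.le (by positivity)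
    push_cast; linarith
  have ht := hasSum_telescope (v := fun b : ℕ => (1:ℝ)/((b:ℝ)+1)) hd hlim
  have hfun : (fun b : ℕ => (1:ℝ)/((b:ℝ)+1) - 1/((↑(b+1):ℝ)+1)) = fun b : ℕ => (1:ℝ)/(((b:ℝ)+1)*((b:ℝ)+2)) := by
    funext b; push_cast
    rw [div_sub_div _ _ (by positivity : ((b:ℝ)+1) ≠ 0) (by positivity : ((b:ℝ)+1+1) ≠ 0)]
    norm_num
    ring_nf
    exact Or.inl trivial
  rw [hfun] at ht
  simpa using ht

lemma P_zero (b : ℕ) : P 0 b = (1:ℝ)/(((b:ℝ)+1)*((b:ℝ)+2)) := by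
  unfold P
  have h1 : (0:ℕ)+b+2 = (b+1)+1 := by ring
  rw [h1, Nat.factorial_succ, Nat.factorial_succ]
  push_cast [Nat.factorial_zero]
  have := fac_pos b
  field_simp
  ring

lemma id3 (a b : ℕ) : ((a:ℝ)+2) * (P (a+1) b/((b:ℝ)+1)) = ((a:ℝ)+1)*(P a b/((b:ℝ)+1)) - P (a+1) b := by
  unfold P
  have h1 : (a+1)+b+2 = (a+b+2)+1 := by ring
  rw [h1, Nat.factorial_succ, Nat.factorial_succ]
  push_cast
  have h2 := fac_pos (a+b+2)
  have h3 := fac_pos a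
  have h4 := fac_pos b
  have h5 : ((b:ℝ)+1) ≠ 0 := by positivity
  field_simp
  ring

lemma H2_succ (n : ℕ) : H2 (n+1) = H2 n + 1/((n:ℝ)+1)^2 := by
  simp [H2, Finset.sum_range_succ]

lemma S3 (a : ℕ) : HasSum (fun b => P a b / ((b:ℝ)+1)) ((π^2/6 - H2 (a+1))/((a:ℝ)+1)) := by
  induction a with
  | zero =>
    have h := hz2'.sub htel1
    have hfun : (fun b : ℕ => (1:ℝ)/((b:ℝ)+1)^2 - 1/(((b:ℝ)+1)*((b:ℝ)+2))) = fun b => P 0 b / ((b:ℝ)+1) := by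
      funext b
      rw [P_zero]
      have h1 : ((b:ℝ)+1) ≠ 0 := by positivity
      have h2 : ((b:ℝ)+2) ≠ 0 := by positivity
      field_simp
      ring
    rw [hfun] at h
    convert h using 1
    · rfl
    simp [H2_succ, H2]
  | succ a ih =>
    have h := (ih.mul_left ((a:ℝ)+1)).sub (S1 (a+1))
    have hfun : (fun b : ℕ => ((a:ℝ)+1)*(P a b/((b:ℝ)+1)) - P (a+1) b) = fun b => ((a:ℝ)+2) * (P (a+1) b/((b:ℝ)+1)) := by
      funext b; rw [id3]
    rw [hfun] at h
    have h2 := h.mul_left (((a:ℝ)+2)⁻¹)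
    have ha1 : ((a:ℝ)+1) ≠ 0 := by positivity
    have ha2 : ((a:ℝ)+2) ≠ 0 := by positivity
    convert h2 using 1
    · rfl
    · funext b; push_cast; field_simp
    · rw [H2_succ (a+1)]
      push_cast
      field_simp
      ring


lemma H2_nonneg (N : ℕ) : 0 ≤ H2 N := by
  unfold H2; positivity

lemma H2_le (N : ℕ) : H2 N ≤ π^2/6 := by
  unfold H2
  rw [← hz2'.tsum_eq]
  exact Summable.sum_le_tsum (Finset.range N) (fun i _ => by positivity) hz2'.summable

lemma H2_mono {M N : ℕ} (h : M ≤ N) : H2 M ≤ H2 N := by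
  unfold H2
  apply Finset.sum_le_sum_of_subset_of_nonneg (Finset.range_subset_range.mpr h)
  intro i _ _; positivity

lemma S4 (a k : ℕ) : HasSum (fun b => if k ≤ b then P a b else 0) (Q a k / ((a:ℝ)+1)) := by
  have hlim : Tendsto (fun b : ℕ => Q a (b+k)) atTop (nhds 0) :=
    (Q_tendsto a).comp (tendsto_add_atTop_nat k)
  have hd : ∀ b : ℕ, Q a ((b+1)+k) ≤ Q a (b+k) := by
    intro b
    have : (b+1)+k = (b+k)+1 := by ring
    rw [this]
    exact Q_antitone a (b+k)
  have ht := hasSum_telescope (v := fun b : ℕ => Q a (b+k)) hd hlim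
  have hfun : (fun b : ℕ => Q a (b+k) - Q a ((b+1)+k)) = fun b => ((a:ℝ)+1) * P a (b+k) := by
    funext b
    have : (b+1)+k = (b+k)+1 := by ring
    rw [this]
    exact id1 a (b+k)
  rw [show (fun n : ℕ => Q a (n+k) - Q a (n+1+k)) = fun b => ((a:ℝ)+1) * P a (b+k) from hfun] at ht
  -- inject along b ↦ b + k
  have hi : Function.Injective (fun b : ℕ => b + k) := add_left_injective k
  have h0 : ∀ x ∉ Set.range (fun b : ℕ => b + k), (if k ≤ x then ((a:ℝ)+1) * P a x else 0) = 0 := by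
    intro x hx
    rw [if_neg]
    intro hk
    exact hx ⟨x - k, Nat.sub_add_cancel hk⟩
  have hcomp : ((fun x => if k ≤ x then ((a:ℝ)+1) * P a x else 0) ∘ (fun b : ℕ => b + k))
      = fun b => ((a:ℝ)+1) * P a (b+k) := by
    funext b; simp [Nat.le_add_left]
  have h2 : HasSum (fun x => if k ≤ x then ((a:ℝ)+1) * P a x else 0) (Q a k) := by
    rw [← Function.Injective.hasSum_iff hi h0, hcomp]
    simpa using ht
  have h3 := h2.mul_left (((a:ℝ)+1)⁻¹)
  have ha : ((a:ℝ)+1) ≠ 0 := by positivity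
  convert h3 using 1
  · rfl
  · funext b
    split_ifs <;> field_simp <;> simp
  · rw [div_eq_inv_mul]


lemma H2_add (s t : ℕ) : H2 (s+t) = H2 s + ∑ k ∈ Finset.range t, (1:ℝ)/(((s:ℝ)+(k:ℝ))+1)^2 := by
  induction t with
  | zero => simp
  | succ t ih =>
    rw [show s+(t+1) = (s+t)+1 from rfl, H2_succ, ih, Finset.sum_range_succ]
    push_cast
    ring

noncomputable def r (a : ℕ) : ℝ := ∑' k : ℕ, P a k / (((a:ℝ)+1)*((a:ℝ)+(k:ℝ)+2))

section S5sec
variable (a : ℕ)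

private noncomputable def F (x : ℕ × ℕ) : ℝ :=
  if x.2 ≤ x.1 then P a x.1 / ((a:ℝ)+(x.2:ℝ)+2)^2 else 0

lemma F_nonneg : ∀ x, 0 ≤ F a x := by
  intro x; unfold F
  split_ifs
  · have := P_nonneg a x.1; positivity
  · exact le_refl 0

lemma fiber_b (b : ℕ) : HasSum (fun k => F a (b,k)) (P a b * (H2 (a+b+2) - H2 (a+1))) := by
  have h0 : ∀ k ∉ Finset.range (b+1), F a (b,k) = 0 := by
    intro k hk
    unfold F
    rw [if_neg]
    simpa using fun h => hk (Finset.mem_range.mpr (Nat.lt_succ_of_le h))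
  have h := hasSum_sum_of_ne_finset_zero (L := SummationFilter.unconditional _) h0
  have hval : ∑ k ∈ Finset.range (b+1), F a (b,k) = P a b * (H2 (a+b+2) - H2 (a+1)) := by
    have h1 : ∑ k ∈ Finset.range (b+1), F a (b,k)
        = ∑ k ∈ Finset.range (b+1), P a b * ((1:ℝ)/(((a:ℝ)+1+(k:ℝ))+1)^2) := by
      apply Finset.sum_congr rfl
      intro k hk
      unfold F
      rw [if_pos (Nat.lt_succ_iff.mp (Finset.mem_range.mp hk))]
      rw [mul_one_div]
      congr 2
      ring
    rw [h1, ← Finset.mul_sum]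
    congr 1
    have h2 := H2_add (a+1) (b+1)
    have h3 : (a+1)+(b+1) = a+b+2 := by ring
    rw [h3] at h2
    push_cast at h2 ⊢
    linarith
  rwa [hval] at h

lemma fiber_k (k : ℕ) : HasSum (fun b => F a (b,k)) (P a k / (((a:ℝ)+1) * ((a:ℝ)+(k:ℝ)+2))) := by
  have h := (S4 a k).mul_right ((1:ℝ)/((a:ℝ)+(k:ℝ)+2)^2)
  have hfun : (fun b => (if k ≤ b then P a b else 0) * ((1:ℝ)/((a:ℝ)+(k:ℝ)+2)^2)) = fun b => F a (b,k) := by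
    funext b
    unfold F
    split_ifs <;> simp [div_eq_mul_inv]
  rw [hfun] at h
  convert h using 1
  · rfl
  rw [Q_eq]
  have h1 : ((a:ℝ)+1) ≠ 0 := by positivity
  have h2 : ((a:ℝ)+(k:ℝ)+2) ≠ 0 := by positivity
  field_simp

lemma F_summable : Summable (F a) := by
  rw [summable_prod_of_nonneg (fun x => F_nonneg a x)]
  constructor
  · exact fun b => (fiber_b a b).summable
  · apply Summable.of_nonneg_of_le (f := fun b => P a b * (π^2/6))
    · intro b
      rw [(fiber_b a b).tsum_eq]
      have := P_nonneg a b
      have h1 := H2_mono (show a+1 ≤ a+b+2 by omega)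
      nlinarith
    · intro b
      rw [(fiber_b a b).tsum_eq]
      have := P_nonneg a b
      have h2 := H2_le (a+b+2)
      have h3 := H2_nonneg (a+1)
      nlinarith
    · exact (S1 a).summable.mul_right _

lemma S5a' : HasSum (fun k : ℕ => P a k / (((a:ℝ)+1)*((a:ℝ)+(k:ℝ)+2))) (∑' x, F a x) := by
  have hsw : HasSum (F a ∘ ⇑(Equiv.prodComm ℕ ℕ)) (∑' x, F a x) :=
    (Equiv.prodComm ℕ ℕ).hasSum_iff.mpr (F_summable a).hasSum
  exact hsw.prod_fiberwise (fun k => fiber_k a k)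

lemma S5a : HasSum (fun k : ℕ => P a k / (((a:ℝ)+1)*((a:ℝ)+(k:ℝ)+2))) (r a) := by
  unfold r
  rw [(S5a' a).tsum_eq]
  exact S5a' a

lemma S5b : HasSum (fun b => P a b * (H2 (a+b+2) - H2 (a+1))) (r a) := by
  have h := ((F_summable a).hasSum).prod_fiberwise (fun b => fiber_b a b)
  unfold r
  rw [(S5a' a).tsum_eq]
  exact h

lemma S5 : HasSum (fun b => P a b * H2 (a+b+2)) (H2 (a+1) * (1/((a:ℝ)+1)^2) + r a) := by
  have h := ((S1 a).mul_left (H2 (a+1))).add (S5b a)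
  have hfun : (fun b => H2 (a+1) * P a b + P a b * (H2 (a+b+2) - H2 (a+1))) = fun b => P a b * H2 (a+b+2) := by
    funext b; ring
  rwa [hfun] at h

end S5sec


private noncomputable def f2 (x : ℕ × ℕ) : ℝ := (1/((x.1:ℝ)+1)^2) * (1/((x.2:ℝ)+1)^2)
private noncomputable def D (x : ℕ × ℕ) : ℝ := if x.2 ≤ x.1 then f2 x else 0
private noncomputable def Dlt (x : ℕ × ℕ) : ℝ := if x.2 < x.1 then f2 x else 0
private noncomputable def Ddiag (x : ℕ × ℕ) : ℝ := if x.1 = x.2 then f2 x else 0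

lemma f2_nonneg (x : ℕ × ℕ) : 0 ≤ f2 x := by unfold f2; positivity

lemma hf2 : HasSum f2 ((π^2/6)*(π^2/6)) := by
  have hs := Summable.mul_of_nonneg (f := fun b:ℕ => (1:ℝ)/((b:ℝ)+1)^2)
    (g := fun b:ℕ => (1:ℝ)/((b:ℝ)+1)^2) hz2'.summable hz2'.summable
    (fun i => by positivity) (fun i => by positivity)
  have h := HasSum.mul hz2' hz2' hs
  unfold f2
  exact h

lemma hD_fiber (b : ℕ) : HasSum (fun c => D (b,c)) ((1/((b:ℝ)+1)^2) * H2 (b+1)) := by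
  have h0 : ∀ c ∉ Finset.range (b+1), D (b,c) = 0 := by
    intro c hc
    unfold D
    rw [if_neg]
    simpa using fun h => hc (Finset.mem_range.mpr (Nat.lt_succ_of_le h))
  have h := hasSum_sum_of_ne_finset_zero (L := SummationFilter.unconditional _) h0
  have hval : ∑ c ∈ Finset.range (b+1), D (b,c) = (1/((b:ℝ)+1)^2) * H2 (b+1) := by
    have h1 : ∑ c ∈ Finset.range (b+1), D (b,c)
        = ∑ c ∈ Finset.range (b+1), (1/((b:ℝ)+1)^2) * (1/((c:ℝ)+1)^2) := by
      apply Finset.sum_congr rfl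
      intro c hc
      unfold D f2
      rw [if_pos (Nat.lt_succ_iff.mp (Finset.mem_range.mp hc))]
    rw [h1, ← Finset.mul_sum]
    rfl
  rwa [hval] at h

lemma hD_summable : Summable D := by
  apply Summable.of_nonneg_of_le (f := f2)
  · intro x; unfold D; split_ifs
    · exact f2_nonneg x
    · exact le_refl 0
  · intro x; unfold D; split_ifs
    · exact le_refl _
    · exact f2_nonneg x
  · exact hf2.summable

lemma hdiag : HasSum Ddiag (π^4/90) := by
  have hi : Function.Injective (fun b : ℕ => ((b,b) : ℕ × ℕ)) := by
    intro x y h; simpa using congrArg Prod.fst h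
  have h0 : ∀ x ∉ Set.range (fun b : ℕ => ((b,b) : ℕ × ℕ)), Ddiag x = 0 := by
    intro x hx
    unfold Ddiag
    rw [if_neg]
    intro h
    exact hx ⟨x.1, by rw [Prod.ext_iff]; exact ⟨rfl, h⟩⟩
  rw [← Function.Injective.hasSum_iff hi h0]
  have hfun : (Ddiag ∘ (fun b : ℕ => ((b,b) : ℕ × ℕ))) = fun b : ℕ => (1:ℝ)/((b:ℝ)+1)^4 := by
    funext b
    simp only [Function.comp, Ddiag, if_pos rfl, if_true, f2]
    have : ((b:ℝ)+1) ≠ 0 := by positivity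
    field_simp
  rw [hfun]
  exact hz4'

lemma hK : HasSum (fun b : ℕ => (1/((b:ℝ)+1)^2) * H2 (b+1)) (7*π^4/360) := by
  have hD := hD_summable.hasSum
  have hKsum := hD.prod_fiberwise hD_fiber
  -- Dlt = D - Ddiag
  have hDlt : HasSum Dlt ((∑' x, D x) - π^4/90) := by
    have h := hD.sub hdiag
    have hfun : (fun x => D x - Ddiag x) = Dlt := by
      funext x
      obtain ⟨i, j⟩ := x
      unfold D Ddiag Dlt
      dsimp only
      split_ifs <;> (first | ring1 | (exfalso; omega))
    rwa [hfun] at h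
  have hDswap : HasSum (Dlt ∘ ⇑(Equiv.prodComm ℕ ℕ)) ((∑' x, D x) - π^4/90) :=
    (Equiv.prodComm ℕ ℕ).hasSum_iff.mpr hDlt
  have hful : HasSum f2 ((∑' x, D x) + ((∑' x, D x) - π^4/90)) := by
    have h := hD.add hDswap
    have hfun : (fun x => D x + (Dlt ∘ ⇑(Equiv.prodComm ℕ ℕ)) x) = f2 := by
      funext x
      obtain ⟨i, j⟩ := x
      simp only [Function.comp, Equiv.prodComm_apply, Prod.swap]
      unfold D Dlt
      dsimp only
      have hsymm : f2 (j, i) = f2 (i, j) := by unfold f2; ring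
      split_ifs <;> (first | ring1 | (rw [hsymm]; ring1) | (exfalso; omega))
    rwa [hfun] at h
  have heq := hf2.unique hful
  have hSD : (∑' x, D x) = 7*π^4/360 := by nlinarith [heq]
  rwa [hSD] at hKsum

private noncomputable def phi (x : ℕ × ℕ) : ℝ := P x.1 x.2 / (((x.1:ℝ)+1)*((x.2:ℝ)+1))
private noncomputable def psi (x : ℕ × ℕ) : ℝ := P x.1 x.2 / (((x.1:ℝ)+1)*((x.1:ℝ)+(x.2:ℝ)+2))

lemma phi_fiber (a : ℕ) : HasSum (fun b => phi (a,b)) ((π^2/6 - H2 (a+1))/(((a:ℝ)+1)^2)) := by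
  have h := (S3 a).div_const ((a:ℝ)+1)
  have ha : ((a:ℝ)+1) ≠ 0 := by positivity
  convert h using 1
  · rfl
  · funext b; unfold phi; rw [div_div]; ring_nf
  · rw [div_div]; ring_nf

lemma phi_nonneg (x : ℕ × ℕ) : 0 ≤ phi x := by
  unfold phi
  have := P_nonneg x.1 x.2
  positivity

lemma phi_summable : Summable phi := by
  rw [summable_prod_of_nonneg phi_nonneg]
  refine ⟨fun a => (phi_fiber a).summable, ?_⟩
  apply Summable.of_nonneg_of_le (f := fun a : ℕ => (π^2/6) * (1/((a:ℝ)+1)^2))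
  · intro a
    rw [(phi_fiber a).tsum_eq]
    have h1 := H2_le (a+1)
    have h2 : (0:ℝ) < ((a:ℝ)+1)^2 := by positivity
    apply div_nonneg (by linarith) h2.le
  · intro a
    rw [(phi_fiber a).tsum_eq, mul_one_div]
    apply div_le_div_of_nonneg_right ?_ (by positivity)
    linarith [H2_nonneg (a+1)]
  · exact hz2'.summable.mul_left _

lemma hphi : HasSum phi (π^4/120) := by
  have h := phi_summable.hasSum.prod_fiberwise phi_fiber
  have h2 : HasSum (fun a : ℕ => (π^2/6 - H2 (a+1))/(((a:ℝ)+1)^2)) ((π^2/6)*(π^2/6) - 7*π^4/360) := by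
    have := (hz2'.mul_left (π^2/6)).sub hK
    convert this using 1
    · rfl
    funext a
    have ha : ((a:ℝ)+1) ≠ 0 := by positivity
    field_simp
  have heq := h.unique h2
  have : (∑' x, phi x) = π^4/120 := by rw [heq]; ring
  rw [← this]
  exact phi_summable.hasSum

lemma psi_nonneg (x : ℕ × ℕ) : 0 ≤ psi x := by
  unfold psi
  have := P_nonneg x.1 x.2
  positivity

lemma psi_le_phi (x : ℕ × ℕ) : psi x ≤ phi x := by
  unfold psi phi
  exact div_le_div_of_nonneg_left (P_nonneg x.1 x.2) (by positivity)
    (by nlinarith [Nat.cast_nonneg (α := ℝ) x.1, Nat.cast_nonneg (α := ℝ) x.2])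

lemma psi_summable : Summable psi :=
  Summable.of_nonneg_of_le psi_nonneg psi_le_phi phi_summable

lemma hpsi : HasSum psi (π^4/240) := by
  have hps := psi_summable.hasSum
  have hswap : HasSum (psi ∘ ⇑(Equiv.prodComm ℕ ℕ)) (∑' x, psi x) :=
    (Equiv.prodComm ℕ ℕ).hasSum_iff.mpr hps
  have hadd := hps.add hswap
  have hfun : (fun x => psi x + (psi ∘ ⇑(Equiv.prodComm ℕ ℕ)) x) = phi := by
    funext x
    simp only [Function.comp, Equiv.prodComm_apply, Prod.swap]
    unfold psi phi
    rw [P_symm x.2 x.1]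
    have h1 : ((x.1:ℝ)+1) ≠ 0 := by positivity
    have h2 : ((x.2:ℝ)+1) ≠ 0 := by positivity
    have h3 : ((x.1:ℝ)+(x.2:ℝ)+2) ≠ 0 := by positivity
    have h4 : ((x.2:ℝ)+(x.1:ℝ)+2) ≠ 0 := by positivity
    field_simp
    ring
  rw [hfun] at hadd
  have heq := hphi.unique hadd
  have : (∑' x, psi x) = π^4/240 := by linarith
  rwa [this] at hps

lemma psi_fiber (a : ℕ) : HasSum (fun b => psi (a,b)) (r a) := S5a a

lemma hr : HasSum (fun a => r a) (π^4/240) := hpsi.prod_fiberwise psi_fiber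

private noncomputable def Phi (x : ℕ × ℕ) : ℝ := P x.1 x.2 * H2 (x.1+x.2+2)

lemma Phi_summable : Summable Phi := by
  rw [summable_prod_of_nonneg (fun x => by
    unfold Phi
    exact mul_nonneg (P_nonneg x.1 x.2) (H2_nonneg _))]
  refine ⟨fun a => (S5 a).summable, ?_⟩
  have : (fun a : ℕ => ∑' b, Phi (a,b)) = fun a => H2 (a+1) * (1/((a:ℝ)+1)^2) + r a := by
    funext a
    exact (S5 a).tsum_eq
  rw [this]
  apply Summable.add
  · apply hK.summable.congr
    intro a; ring
  · exact hr.summable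

lemma hPhi : HasSum Phi (17*π^4/720) := by
  have h := Phi_summable.hasSum.prod_fiberwise (fun a => S5 a)
  have h2 : HasSum (fun a : ℕ => H2 (a+1) * (1/((a:ℝ)+1)^2) + r a) (7*π^4/360 + π^4/240) := by
    apply HasSum.add ?_ hr
    have hfun : (fun b : ℕ => (1/((b:ℝ)+1)^2) * H2 (b+1)) = fun a : ℕ => H2 (a+1) * (1/((a:ℝ)+1)^2) := by
      funext a; ring
    have hK' := hK
    rwa [hfun] at hK'
  have heq := h.unique h2
  have hval : (∑' x, Phi x) = 17*π^4/720 := by rw [heq]; ring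
  rw [← hval]
  exact Phi_summable.hasSum


lemma H2_Icc (N : ℕ) : (∑ j ∈ Finset.Icc 1 N, (1:ℝ)/(j:ℝ)^2) = H2 N := by
  rw [← Finset.Ico_add_one_right_eq_Icc, Finset.sum_Ico_eq_sum_range]
  try simp only [Nat.add_sub_cancel]
  unfold H2
  apply Finset.sum_congr rfl
  intro i _
  push_cast
  ring

lemma hzeta4_pnat : HasSum (fun m : ℕ+ => (1:ℝ)/(m:ℝ)^4) (π^4/90) := by
  rw [← Equiv.hasSum_iff Equiv.pnatEquivNat.symm]
  have hfun : ((fun m : ℕ+ => (1:ℝ)/(m:ℝ)^4) ∘ ⇑Equiv.pnatEquivNat.symm) = fun b : ℕ => (1:ℝ)/((b:ℝ)+1)^4 := by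
    funext b
    simp only [Function.comp, Equiv.pnatEquivNat_symm_apply]
    norm_num [Nat.succPNat]
  rw [hfun]
  exact hz4'

end Stmt12

open Stmt12 in
/-- `ζ(4) = (8/17) Σ_{m,n ≥ 1} ((m−1)!(n−1)!/(m+n)!) Σ_{j=1}^{m+n} 1/j²`,
i.e. `Z_2(1;1 | 2,1) = (17/8) ζ(4)`. -/
theorem stmt12 :
    ∑' m : ℕ+, (1 : ℝ) / (m : ℝ) ^ 4
    = (8 / 17) * ∑' mn : ℕ+ × ℕ+,
        ((((mn.1 : ℕ) - 1).factorial * ((mn.2 : ℕ) - 1).factorial : ℕ) : ℝ) /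
            ((((mn.1 : ℕ) + (mn.2 : ℕ)).factorial : ℕ) : ℝ) *
          ∑ j ∈ Finset.Icc 1 ((mn.1 : ℕ) + (mn.2 : ℕ)), (1 : ℝ) / (j : ℝ) ^ 2 := by
  have hR : HasSum (fun mn : ℕ+ × ℕ+ =>
        ((((mn.1 : ℕ) - 1).factorial * ((mn.2 : ℕ) - 1).factorial : ℕ) : ℝ) /
            ((((mn.1 : ℕ) + (mn.2 : ℕ)).factorial : ℕ) : ℝ) *
          ∑ j ∈ Finset.Icc 1 ((mn.1 : ℕ) + (mn.2 : ℕ)), (1 : ℝ) / (j : ℝ) ^ 2) (17*π^4/720) := by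
    rw [← Equiv.hasSum_iff (Equiv.prodCongr Equiv.pnatEquivNat.symm Equiv.pnatEquivNat.symm)]
    have hfun : ((fun mn : ℕ+ × ℕ+ =>
        ((((mn.1 : ℕ) - 1).factorial * ((mn.2 : ℕ) - 1).factorial : ℕ) : ℝ) /
            ((((mn.1 : ℕ) + (mn.2 : ℕ)).factorial : ℕ) : ℝ) *
          ∑ j ∈ Finset.Icc 1 ((mn.1 : ℕ) + (mn.2 : ℕ)), (1 : ℝ) / (j : ℝ) ^ 2)
        ∘ ⇑(Equiv.prodCongr Equiv.pnatEquivNat.symm Equiv.pnatEquivNat.symm)) = Phi := by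
      funext x
      obtain ⟨a, b⟩ := x
      simp only [Function.comp, Equiv.prodCongr_apply, Equiv.pnatEquivNat_symm_apply,
        Prod.map, Nat.succPNat_coe]
      have h1 : a + 1 - 1 = a := by omega
      have h2 : b + 1 - 1 = b := by omega
      have h3 : a + 1 + (b + 1) = a + b + 2 := by omega
      rw [h1, h2, h3, H2_Icc]
      rfl
    rw [hfun]
    exact hPhi
  rw [hzeta4_pnat.tsum_eq, hR.tsum_eq]
  ring
end
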